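/- arXiv:1408.6259 — 6 statements merged into one kernel-verified Lean document; each statement's English description precedes it below -/
import Mathlib

section
/- Let $G$ be an infinite group whose cardinality $\varkappa$ is a regular cardinal. Then there exists a partition of $G$ into countably many cells $G=\bigcup_{n\in\omega}A_n$ such that $cov(A_nA_n^{-1})=\varkappa$ for each $n\in\omega$. -/
open Cardinal Pointwise

/-- The covering number of a subset `A` of a group `G`:
the least cardinality of a set `X ⊆ G` with `X * A = G`. -/
noncomputable def cov {G : Type*} [Group G] (A : Set G) : Cardinal :=
  sInf {c : Cardinal | ∃ X : Set G, #X = c ∧ X * A = Set.univ}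

universe u

namespace PCV

variable {G : Type u} [Group G]

lemma mk_inv_set (s : Set G) : #(s⁻¹ : Set G) = #s := by
  have : (s⁻¹ : Set G) = (fun x : G => x⁻¹) '' s := by
    ext x
    constructor
    · intro h; exact ⟨x⁻¹, Set.mem_inv.1 h, inv_inv x⟩
    · rintro ⟨y, hy, rfl⟩; exact Set.mem_inv.2 (by simpa using hy)
  rw [this, Cardinal.mk_image_eq inv_injective]

lemma mk_closure_le (s : Set G) :
    #(Subgroup.closure s : Subgroup G) ≤ max ℵ₀ (#s + #s) := by
  classical
  set t : Set G := s ∪ s⁻¹ with ht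
  have hsub : (Subgroup.closure s : Set G) ⊆
      Set.range (fun l : List t => (l.map Subtype.val).prod) := by
    intro x hx
    have hx' : x ∈ Submonoid.closure t := by
      rw [ht, ← Subgroup.closure_toSubmonoid]; exact hx
    obtain ⟨l, hl, rfl⟩ := Submonoid.exists_list_of_mem_closure hx'
    refine ⟨l.pmap (fun y hy => (⟨y, hy⟩ : t)) hl, ?_⟩
    simp [List.map_pmap]
  calc #(Subgroup.closure s : Subgroup G)
      ≤ #(Set.range (fun l : List t => (l.map Subtype.val).prod)) :=
        Cardinal.mk_le_mk_of_subset hsub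
    _ ≤ #(List t) := Cardinal.mk_range_le
    _ ≤ max ℵ₀ #t := Cardinal.mk_list_le_max _
    _ ≤ max ℵ₀ (#s + #s) := by
        refine max_le (le_max_left _ _) (le_trans ?_ (le_max_right _ _))
        calc #t ≤ #s + #(s⁻¹ : Set G) := Cardinal.mk_union_le _ _
          _ = #s + #s := by rw [mk_inv_set]



/-- pick an element outside `S` with minimal index, if possible. -/
noncomputable def pickG (idx : G → Ordinal.{u}) (S : Set G) : G :=
  letI := Classical.dec Sᶜ.Nonempty
  if h : Sᶜ.Nonempty then Function.argminOn idx Sᶜ h else 1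

lemma pickG_not_mem {idx : G → Ordinal.{u}} {S : Set G} (h : Sᶜ.Nonempty) :
    pickG idx S ∉ S := by
  letI := Classical.dec Sᶜ.Nonempty
  rw [pickG, dif_pos h]
  exact Function.argminOn_mem idx Sᶜ h

lemma pickG_min {idx : G → Ordinal.{u}} {S : Set G} (h : Sᶜ.Nonempty)
    {g : G} (hg : g ∉ S) : ¬ idx g < idx (pickG idx S) := by
  letI := Classical.dec Sᶜ.Nonempty
  rw [pickG, dif_pos h]
  exact Function.not_lt_argminOn idx Sᶜ hg

/-- a transfinite sequence of elements, each outside the subgroup generated by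
the previous ones, of minimal index. -/
noncomputable def xseq (idx : G → Ordinal.{u}) : Ordinal.{u} → G :=
  Ordinal.lt_wf.fix (fun α ih =>
    pickG idx (Subgroup.closure (⋃ β : Set.Iio α, {ih β.1 β.2}) : Set G))

/-- the increasing chain of subgroups. -/
noncomputable def Hch (idx : G → Ordinal.{u}) (α : Ordinal.{u}) : Subgroup G :=
  Subgroup.closure (xseq idx '' Set.Iio α)

lemma xseq_eq (idx : G → Ordinal.{u}) (α : Ordinal.{u}) :
    xseq idx α = pickG idx (Hch idx α : Set G) := by
  rw [xseq, WellFounded.fix_eq]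
  rw [show (⋃ β : Set.Iio α, {Ordinal.lt_wf.fix (fun α ih =>
    pickG idx (Subgroup.closure (⋃ β : Set.Iio α, {ih β.1 β.2}) : Set G)) β.1})
      = xseq idx '' Set.Iio α from ?_]
  · rfl
  · ext g
    simp only [Set.mem_iUnion, Set.mem_singleton_iff, Set.mem_image, Set.mem_Iio]
    constructor
    · rintro ⟨⟨β, hβ⟩, rfl⟩; exact ⟨β, hβ, rfl⟩
    · rintro ⟨β, hβ, rfl⟩; exact ⟨⟨β, hβ⟩, rfl⟩

lemma Hch_mono (idx : G → Ordinal.{u}) {α β : Ordinal.{u}} (h : α ≤ β) :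
    Hch idx α ≤ Hch idx β :=
  Subgroup.closure_mono (Set.image_mono (Set.Iio_subset_Iio h))

lemma Hch_zero (idx : G → Ordinal.{u}) : Hch idx 0 = ⊥ := by
  rw [Hch]
  have : Set.Iio (0 : Ordinal.{u}) = ∅ := by
    ext β; simp
  rw [this, Set.image_empty, Subgroup.closure_empty]

lemma Hch_limit_mem (idx : G → Ordinal.{u}) {γ : Ordinal.{u}} (hγ : Order.IsSuccLimit γ)
    {g : G} (hg : g ∈ Hch idx γ) : ∃ β < γ, g ∈ Hch idx β := by
  have himg : xseq idx '' Set.Iio γ = ⋃ β : Set.Iio γ, xseq idx '' Set.Iio β.1 := by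
    ext y
    simp only [Set.mem_iUnion, Set.mem_image, Set.mem_Iio]
    constructor
    · rintro ⟨δ, hδ, rfl⟩
      exact ⟨⟨δ + 1, hγ.succ_lt hδ⟩, δ, by
        simpa using Order.lt_succ δ, rfl⟩
    · rintro ⟨⟨β, hβ⟩, δ, hδ, rfl⟩
      exact ⟨δ, hδ.trans hβ, rfl⟩
  rw [Hch, himg, Subgroup.closure_iUnion] at hg
  haveI : Nonempty (Set.Iio γ) := ⟨⟨0, hγ.bot_lt⟩⟩
  have hdir : Directed (· ≤ ·) fun β : Set.Iio γ =>
      Subgroup.closure (xseq idx '' Set.Iio β.1) := by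
    intro a b
    rcases le_total a.1 b.1 with h | h
    · exact ⟨b, Hch_mono idx h, le_rfl⟩
    · exact ⟨a, le_rfl, Hch_mono idx h⟩
  obtain ⟨β, hβ⟩ := (Subgroup.mem_iSup_of_directed hdir).mp hg
  exact ⟨β.1, β.2, hβ⟩

lemma xseq_mem_succ (idx : G → Ordinal.{u}) (α : Ordinal.{u}) :
    xseq idx α ∈ Hch idx (α + 1) := by
  apply Subgroup.subset_closure
  exact ⟨α, by simpa using Order.lt_succ α, rfl⟩

lemma xseq_not_mem (idx : G → Ordinal.{u}) {α : Ordinal.{u}}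
    (h : ∃ g, g ∉ Hch idx α) : xseq idx α ∉ Hch idx α := by
  obtain ⟨g, hg⟩ := h
  rw [xseq_eq]
  exact pickG_not_mem ⟨g, hg⟩

variable {idx : G → Ordinal.{u}}

lemma mem_of_idx_lt (hinj : Function.Injective idx) :
    ∀ α (g : G), idx g < α → g ∈ Hch idx α := by
  intro α
  induction α using Ordinal.induction with
  | _ α IH =>
    intro g hg
    by_cases h1 : idx g + 1 < α
    · exact Hch_mono idx h1.le (IH _ h1 g (by
        simpa using Order.lt_succ (idx g)))
    · have hα : α = idx g + 1 := by
        apply le_antisymm (not_lt.1 h1)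
        rw [Ordinal.add_one_eq_succ]
        exact Order.succ_le_of_lt hg
      subst hα
      by_cases hm : g ∈ Hch idx (idx g)
      · exact Hch_mono idx (le_self_add) hm
      · have hne : ((Hch idx (idx g) : Set G))ᶜ.Nonempty := ⟨g, hm⟩
        have hx := xseq_eq idx (idx g)
        have hxnm : xseq idx (idx g) ∉ Hch idx (idx g) := by
          rw [hx]; exact pickG_not_mem hne
        have hxe : xseq idx (idx g) = g := by
          apply hinj
          have h2 : ¬ idx g < idx (xseq idx (idx g)) := by
            rw [hx]; exact pickG_min hne hm
          have h3 : ¬ idx (xseq idx (idx g)) < idx g := by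
            intro hlt
            exact hxnm (IH (idx g)
              (by simpa using Order.lt_succ (idx g)) _ hlt)
          exact le_antisymm (not_lt.1 h2) (not_lt.1 h3)
        have := xseq_mem_succ idx (idx g)
        rwa [hxe] at this

variable {G : Type u} [Group G] {idx : G → Ordinal.{u}}



/-- the rank of an element. -/
noncomputable def rk (idx : G → Ordinal.{u}) (g : G) : Ordinal.{u} :=
  sInf {α | g ∈ Hch idx (α + 1)}

lemma rk_set_nonempty (hinj : Function.Injective idx) (g : G) :
    {α | g ∈ Hch idx (α + 1)}.Nonempty :=
  ⟨idx g, mem_of_idx_lt hinj _ g (by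
    simpa using Order.lt_succ (idx g))⟩

lemma rk_spec (hinj : Function.Injective idx) (g : G) :
    g ∈ Hch idx (rk idx g + 1) :=
  csInf_mem (rk_set_nonempty hinj g)

lemma rk_le {g : G} {δ : Ordinal.{u}} (h : g ∈ Hch idx (δ + 1)) : rk idx g ≤ δ :=
  csInf_le' h

lemma rk_le_idx (hinj : Function.Injective idx) (g : G) : rk idx g ≤ idx g :=
  rk_le (mem_of_idx_lt hinj _ g (by
    simpa using Order.lt_succ (idx g)))

lemma rk_one : rk idx 1 = 0 :=
  le_antisymm (rk_le (one_mem _)) zero_le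

lemma not_mem_rk (hinj : Function.Injective idx) {g : G} (hg : g ≠ 1) :
    g ∉ Hch idx (rk idx g) := by
  rcases Ordinal.zero_or_succ_or_isSuccLimit (rk idx g) with h0 | ⟨a, ha⟩ | hl
  · rw [h0, Hch_zero]
    simpa using hg
  · intro hm
    have : rk idx g ≤ a := rk_le (by rwa [Ordinal.add_one_eq_succ, ha])
    rw [← ha] at this
    exact (Order.lt_succ a).not_ge this
  · intro hm
    obtain ⟨β, hβ, hmem⟩ := Hch_limit_mem idx hl hm
    have : rk idx g ≤ β := rk_le (Hch_mono idx (le_self_add) hmem)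
    exact hβ.not_ge this

lemma mem_iff_rk_lt (hinj : Function.Injective idx) {g : G} (hg : g ≠ 1)
    {γ : Ordinal.{u}} : g ∈ Hch idx γ ↔ rk idx g < γ := by
  constructor
  · intro h
    by_contra hc
    exact not_mem_rk hinj hg (Hch_mono idx (not_lt.1 hc) h)
  · intro h
    exact Hch_mono idx (by rw [Ordinal.add_one_eq_succ]; exact Order.succ_le_of_lt h)
      (rk_spec hinj g)

lemma rk_inv (g : G) : rk idx g⁻¹ = rk idx g := by
  unfold rk
  congr 1
  ext α
  simp only [Set.mem_setOf_eq]
  constructor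
  · intro h
    have := inv_mem h
    simpa using this
  · intro h
    exact inv_mem h

lemma rk_mul (hinj : Function.Injective idx) {a b : G} (ha : a ≠ 1) (hb : b ≠ 1)
    (h : rk idx b < rk idx a) : rk idx (a * b) = rk idx a := by
  have hab : a * b ≠ 1 := by
    intro he
    have hba : a = b⁻¹ := mul_eq_one_iff_eq_inv.1 he
    rw [hba, rk_inv] at h
    exact lt_irrefl _ h
  have hble : rk idx b + 1 ≤ rk idx a + 1 := by
    simpa using Order.succ_le_succ h.le
  have hle : rk idx (a * b) ≤ rk idx a :=
    rk_le (mul_mem (rk_spec hinj a) (Hch_mono idx hble (rk_spec hinj b)))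
  refine le_antisymm hle (not_lt.1 fun hlt => ?_)
  have hmem : a * b ∈ Hch idx (rk idx a) := (mem_iff_rk_lt hinj hab).2 hlt
  have hbm : b ∈ Hch idx (rk idx a) := (mem_iff_rk_lt hinj hb).2 h
  have : a ∈ Hch idx (rk idx a) := by
    have := mul_mem hmem (inv_mem hbm)
    simpa [mul_assoc] using this
  exact not_mem_rk hinj ha this

variable {G : Type u} [Group G] {idx : G → Ordinal.{u}}

lemma self_mem_coset (idx : G → Ordinal.{u}) (α : Ordinal.{u}) (g : G) :
    g ∈ (Hch idx α : Set G) * {g} := by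
  have := Set.mul_mem_mul (SetLike.mem_coe.2 (one_mem (Hch idx α))) (Set.mem_singleton g)
  simpa using this

/-- canonical representative of the right coset `Hch idx α * g`. -/
noncomputable def repC (idx : G → Ordinal.{u}) (α : Ordinal.{u}) (g : G) : G :=
  Function.argminOn idx ((Hch idx α : Set G) * {g})
    ⟨g, self_mem_coset idx α g⟩

lemma repC_mem (idx : G → Ordinal.{u}) (α : Ordinal.{u}) (g : G) :
    repC idx α g ∈ (Hch idx α : Set G) * {g} :=
  Function.argminOn_mem _ _ _

lemma p_mem (idx : G → Ordinal.{u}) (α : Ordinal.{u}) (g : G) :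
    g * (repC idx α g)⁻¹ ∈ Hch idx α := by
  obtain ⟨h, hh, y, hy, hprod⟩ := repC_mem idx α g
  rw [Set.mem_singleton_iff] at hy
  rw [← hprod, hy]
  have : g * (h * g)⁻¹ = h⁻¹ := by group
  rw [this]
  exact inv_mem hh

lemma p_mul_rep (idx : G → Ordinal.{u}) (α : Ordinal.{u}) (g : G) :
    (g * (repC idx α g)⁻¹) * repC idx α g = g := by group

lemma coset_eq {α : Ordinal.{u}} {a b : G} (h : a * b⁻¹ ∈ Hch idx α) :
    (Hch idx α : Set G) * {a} = (Hch idx α : Set G) * {b} := by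
  ext z
  constructor
  · rintro ⟨k, hk, y, hy, rfl⟩
    rw [Set.mem_singleton_iff] at hy
    refine ⟨k * (a * b⁻¹), mul_mem hk h, b, Set.mem_singleton b, ?_⟩
    rw [hy]; group
  · rintro ⟨k, hk, y, hy, rfl⟩
    rw [Set.mem_singleton_iff] at hy
    refine ⟨k * (a * b⁻¹)⁻¹, mul_mem hk (inv_mem h), a, Set.mem_singleton a, ?_⟩
    rw [hy]; group

lemma repC_wd {α : Ordinal.{u}} {a b : G} (h : a * b⁻¹ ∈ Hch idx α) :
    repC idx α a = repC idx α b := by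
  unfold repC
  congr 1
  exact coset_eq h

/-- the ℕ-tag of an ordinal: its finite part. -/
noncomputable def tagO (α : Ordinal.{u}) : ℕ :=
  Cardinal.toNat (α % Ordinal.omega0).card

/-- the H-part of `g` relative to its rank. -/
noncomputable def pfn (idx : G → Ordinal.{u}) (g : G) : G :=
  g * (repC idx (rk idx g) g)⁻¹

/-- the recursive colouring. -/
noncomputable def colF (idx : G → Ordinal.{u}) (g : G) : List ℕ :=
  letI := Classical.dec (g = 1)
  if g = 1 then []
  else
    tagO (rk idx g) ::
      (letI := Classical.dec (rk idx (pfn idx g) < rk idx g)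
       if h : rk idx (pfn idx g) < rk idx g then colF idx (pfn idx g) else [])
termination_by rk idx g
decreasing_by exact h

lemma colF_one : colF idx 1 = [] := by
  rw [colF]
  simp

lemma colF_ne {g : G} (hg : g ≠ 1) :
    ∃ l, colF idx g = tagO (rk idx g) :: l := by
  rw [colF]
  simp only [hg, if_false]
  exact ⟨_, rfl⟩

lemma colF_eq_nil_iff {g : G} : colF idx g = [] ↔ g = 1 := by
  constructor
  · intro h
    by_contra hg
    obtain ⟨l, hl⟩ := colF_ne (idx := idx) hg
    rw [hl] at h
    exact List.cons_ne_nil _ _ h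
  · rintro rfl; exact colF_one

lemma pfn_one_of_not_lt (hinj : Function.Injective idx) {g : G}
    (h : ¬ rk idx (pfn idx g) < rk idx g) : pfn idx g = 1 := by
  by_contra hp
  exact h ((mem_iff_rk_lt hinj hp).1 (p_mem idx (rk idx g) g))

lemma colF_eq (hinj : Function.Injective idx) {g : G} (hg : g ≠ 1) :
    colF idx g = tagO (rk idx g) :: colF idx (pfn idx g) := by
  rw [colF]
  simp only [hg, if_false]
  by_cases h : rk idx (pfn idx g) < rk idx g
  · rw [dif_pos h]
  · rw [dif_neg h, pfn_one_of_not_lt hinj h, colF_one]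

variable {G : Type u} [Group G] {idx : G → Ordinal.{u}}

lemma key_aux (hinj : Function.Injective idx) :
    ∀ (α : Ordinal.{u}) (a b : G), rk idx a = α → a ≠ b → colF idx a = colF idx b →
      tagO (rk idx (a * b⁻¹)) ∈ colF idx a := by
  intro α
  induction α using Ordinal.induction with
  | _ α IH =>
    intro a b hα hne hcol
    have ha1 : a ≠ 1 := by
      rintro rfl
      rw [colF_one] at hcol
      exact hne (colF_eq_nil_iff.1 hcol.symm).symm
    have hb1 : b ≠ 1 := by
      rintro rfl
      rw [colF_one] at hcol
      exact hne (colF_eq_nil_iff.1 hcol)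
    subst hα
    have hcola := colF_eq hinj ha1
    have hcolb := colF_eq hinj hb1
    rcases lt_trichotomy (rk idx a) (rk idx b) with hlt | heq | hgt
    · -- rank of a*b⁻¹ is rk b, whose tag is the common head
      have hd : rk idx (a * b⁻¹) = rk idx b := by
        have h1 : rk idx (b * a⁻¹) = rk idx b := by
          apply rk_mul hinj hb1 (inv_ne_one.2 ha1)
          rwa [rk_inv]
        have h2 : (a * b⁻¹)⁻¹ = b * a⁻¹ := by group
        rw [← rk_inv (a * b⁻¹), h2, h1]
      rw [hd]
      have : tagO (rk idx b) ∈ colF idx b := by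
        rw [hcolb]; exact List.mem_cons_self
      rwa [← hcol] at this
    · -- equal ranks
      by_cases hr : repC idx (rk idx a) a = repC idx (rk idx a) b
      · -- same coset : recurse
        have h2 : pfn idx b = b * (repC idx (rk idx a) b)⁻¹ := by
          rw [pfn, ← heq]
        have hpa : pfn idx a * (pfn idx b)⁻¹ = a * b⁻¹ := by
          rw [show pfn idx a = a * (repC idx (rk idx a) a)⁻¹ from rfl, h2, hr]
          group
        have hpane : pfn idx a ≠ pfn idx b := by
          intro hpe
          apply hne
          calc a = pfn idx a * repC idx (rk idx a) a := (p_mul_rep idx (rk idx a) a).symm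
            _ = pfn idx b * repC idx (rk idx a) b := by rw [hpe, hr]
            _ = b := by rw [h2]; group
        have hcolp : colF idx (pfn idx a) = colF idx (pfn idx b) := by
          have h := hcol
          rw [hcola, hcolb] at h
          injection h with hh1 hh2
        have hpa1 : pfn idx a ≠ 1 := by
          intro hp1
          rw [hp1, colF_one] at hcolp
          exact hpane (by rw [hp1, (colF_eq_nil_iff.1 hcolp.symm)])
        have hpmem : pfn idx a ∈ Hch idx (rk idx a) := by
          rw [pfn]
          exact p_mem idx (rk idx a) a
        have hrkpa := (mem_iff_rk_lt hinj hpa1).1 hpmem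
        have hmem := IH _ hrkpa (pfn idx a) (pfn idx b) rfl hpane hcolp
        rw [hpa] at hmem
        rw [hcola]
        exact List.mem_cons_of_mem _ hmem
      · -- different cosets : rank is rk a
        have hd1 : a * b⁻¹ ≠ 1 := fun he => hne (by rw [← mul_inv_eq_one]; exact he)
        have hdnm : a * b⁻¹ ∉ Hch idx (rk idx a) := fun hmem => hr (repC_wd hmem)
        have hbmem : b ∈ Hch idx (rk idx a + 1) := by
          rw [heq]; exact rk_spec hinj b
        have hdm : a * b⁻¹ ∈ Hch idx (rk idx a + 1) :=
          mul_mem (rk_spec hinj a) (inv_mem hbmem)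
        have hrkd : rk idx (a * b⁻¹) = rk idx a :=
          le_antisymm (rk_le hdm)
            (not_lt.1 fun hlt => hdnm ((mem_iff_rk_lt hinj hd1).2 hlt))
        rw [hrkd, hcola]
        exact List.mem_cons_self
    · -- rk b < rk a
      have hd : rk idx (a * b⁻¹) = rk idx a := by
        apply rk_mul hinj ha1 (inv_ne_one.2 hb1)
        rwa [rk_inv]
      rw [hd, hcola]
      exact List.mem_cons_self

lemma key (hinj : Function.Injective idx) {a b : G} (hne : a ≠ b)
    (hcol : colF idx a = colF idx b) : tagO (rk idx (a * b⁻¹)) ∈ colF idx a :=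
  key_aux hinj (rk idx a) a b rfl hne hcol

variable {G : Type u} [Group G] {idx : G → Ordinal.{u}}

lemma foldr_max_lt {l : List ℕ} {m : ℕ} (h : m ∈ l) : m ≤ l.foldr max 0 := by
  induction l with
  | nil => cases h
  | cons a t ih =>
    rcases List.mem_cons.1 h with rfl | ht
    · exact le_max_left _ _
    · exact le_trans (ih ht) (le_max_right _ _)

lemma hbig_of_card (hunc : ℵ₀ < #G) {α : Ordinal.{u}} (hα : α < (#G).ord) :
    ∃ g, g ∉ Hch idx α := by
  by_contra hc
  push_neg at hc
  have huniv : (Hch idx α : Set G) = Set.univ := Set.eq_univ_of_forall hc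
  have h1 : #(Hch idx α) = #G := by
    rw [show ((Hch idx α : Subgroup G) : Type u) = ((Hch idx α : Set G) : Type u) from rfl]
    rw [huniv, Cardinal.mk_univ]
  have h2 : #(xseq idx '' Set.Iio α) ≤ α.card := by
    have := Cardinal.mk_image_le_lift (f := xseq idx) (s := Set.Iio α)
    rw [Ordinal.mk_Iio_ordinal] at this
    rw [← Cardinal.lift_le.{u+1}]
    exact le_trans this (by rw [Cardinal.lift_lift])
  have h3 : #(Hch idx α) ≤ max ℵ₀ (#(xseq idx '' Set.Iio α) + #(xseq idx '' Set.Iio α)) :=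
    PCV.mk_closure_le _
  have h4 : max ℵ₀ (#(xseq idx '' Set.Iio α) + #(xseq idx '' Set.Iio α)) < #G := by
    apply max_lt hunc
    have hcard : α.card < #G := Cardinal.lt_ord.1 hα
    exact Cardinal.add_lt_of_lt hunc.le (lt_of_le_of_lt h2 hcard) (lt_of_le_of_lt h2 hcard)
  rw [h1] at h3
  exact absurd h3 (not_le.2 h4)

lemma tagO_spec (k : ℕ) (β : Ordinal.{u}) :
    tagO (Ordinal.omega0 * (β + 1) + (k : Ordinal.{u})) = k := by
  rw [tagO, Ordinal.mul_add_mod_self, Ordinal.mod_eq_of_lt (Ordinal.nat_lt_omega0 k),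
    Ordinal.card_nat, Cardinal.toNat_natCast]

lemma gamma_lt (hunc : ℵ₀ < #G) {β : Ordinal.{u}} (hβ : β < (#G).ord) (k : ℕ) :
    Ordinal.omega0 * (β + 1) + (k : Ordinal.{u}) < (#G).ord := by
  rw [Cardinal.lt_ord, Ordinal.card_add, Ordinal.card_mul, Ordinal.card_omega0,
    Ordinal.card_add, Ordinal.card_nat, Ordinal.card_one]
  have h1 : β.card < #G := Cardinal.lt_ord.1 hβ
  have h2 : β.card + 1 < #G :=
    Cardinal.add_lt_of_lt hunc.le h1 (lt_trans Cardinal.one_lt_aleph0 hunc)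
  have h3 : ℵ₀ * (β.card + 1) < #G := Cardinal.mul_lt_of_lt hunc.le hunc h2
  exact Cardinal.add_lt_of_lt hunc.le h3 (lt_trans (Cardinal.nat_lt_aleph0 k) hunc)

lemma gamma_ge (β : Ordinal.{u}) (k : ℕ) :
    β ≤ Ordinal.omega0 * (β + 1) + (k : Ordinal.{u}) := by
  calc β ≤ Ordinal.omega0 * β := Ordinal.le_mul_right _ Ordinal.omega0_pos
    _ ≤ Ordinal.omega0 * (β + 1) := mul_le_mul_right (le_self_add) _
    _ ≤ _ := le_self_add

variable {G : Type u} [Group G] {idx : G → Ordinal.{u}}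

lemma rk_xseq (hinj : Function.Injective idx) (hunc : ℵ₀ < #G)
    {γ : Ordinal.{u}} (hγ : γ < (#G).ord) :
    rk idx (xseq idx γ) = γ ∧ xseq idx γ ≠ 1 := by
  have hnm : xseq idx γ ∉ Hch idx γ := xseq_not_mem idx (hbig_of_card hunc hγ)
  have hne : xseq idx γ ≠ 1 := fun h => hnm (h ▸ one_mem _)
  exact ⟨le_antisymm (rk_le (xseq_mem_succ idx γ))
    (not_lt.1 fun hlt => hnm ((mem_iff_rk_lt hinj hne).2 hlt)), hne⟩

lemma cov_of_mono (hinj : Function.Injective idx)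
    (hlt : ∀ g : G, idx g < (#G).ord)
    (hreg : (#G).IsRegular) (hunc : ℵ₀ < #G)
    (A : Set G) (hA : A.Nonempty)
    (hm : ∀ a ∈ A, ∀ b ∈ A, colF idx a = colF idx b) :
    cov (A * A⁻¹) = #G := by
  obtain ⟨a₀, ha₀⟩ := hA
  have h1D : (1 : G) ∈ A * A⁻¹ := by
    have := Set.mul_mem_mul ha₀ (Set.mem_inv.2 (by simpa using ha₀) : a₀⁻¹ ∈ A⁻¹)
    simpa using this
  have hκmem : #G ∈ {c : Cardinal | ∃ X : Set G, #X = c ∧ X * (A * A⁻¹) = Set.univ} := by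
    refine ⟨Set.univ, Cardinal.mk_univ, ?_⟩
    apply Set.eq_univ_of_forall
    intro g
    have := Set.mul_mem_mul (Set.mem_univ g) h1D
    simpa using this
  apply le_antisymm (csInf_le' hκmem)
  apply le_csInf ⟨#G, hκmem⟩
  rintro c ⟨X, hX, hXA⟩
  by_contra hck
  push_neg at hck
  have hXlt : #X < #G := hX ▸ hck
  -- supremum of ranks of X
  set f : X → Ordinal.{u} := fun x => rk idx (x : G) + 1 with hf
  have hflt : ∀ x : X, f x < (#G).ord := by
    intro x
    have h1 : rk idx (x : G) < (#G).ord := lt_of_le_of_lt (rk_le_idx hinj _) (hlt _)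
    have := (Cardinal.isSuccLimit_ord hreg.1).succ_lt h1
    simpa using this
  have hsup : iSup f < (#G).ord := by
    apply Ordinal.iSup_lt_ord _ hflt
    rw [hreg.cof_eq]
    exact hXlt
  set β := iSup f with hβ
  set n := colF idx a₀ with hn
  set k := n.foldr max 0 + 1 with hk
  set γ := Ordinal.omega0 * (β + 1) + (k : Ordinal.{u}) with hγdef
  have hγo : γ < (#G).ord := gamma_lt hunc hsup k
  have hγβ : β ≤ γ := gamma_ge β k
  have htag : tagO γ = k := tagO_spec k β
  obtain ⟨hrkt, ht1⟩ := rk_xseq hinj hunc hγo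
  set t := xseq idx γ with htdef
  have htmem : t ∈ Set.univ := Set.mem_univ t
  rw [← hXA] at htmem
  obtain ⟨x, hx, d, hd, hxd0⟩ := htmem
  obtain ⟨a, ha, y, hy, hay0⟩ := hd
  have hxd : x * d = t := hxd0
  have hay : a * y = d := hay0
  rw [Set.mem_inv] at hy
  set b := y⁻¹ with hb
  have hdab : d = a * b⁻¹ := by rw [← hay, hb, inv_inv]
  have hrkx : rk idx x < γ := by
    have h1 : f ⟨x, hx⟩ ≤ β := Ordinal.le_iSup f _
    have h2 : rk idx x < f ⟨x, hx⟩ := by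
      simpa [hf] using Order.lt_succ (rk idx x)
    exact lt_of_lt_of_le (lt_of_lt_of_le h2 h1) hγβ
  have hcolab : colF idx a = colF idx b := hm a ha b hy
  have hcola₀ : colF idx a = n := hm a ha a₀ ha₀
  by_cases hab : a = b
  · -- d = 1, t = x
    have hd1 : d = 1 := by rw [hdab, hab, mul_inv_cancel]
    rw [hd1, mul_one] at hxd
    rw [hxd, hrkt] at hrkx
    exact lt_irrefl _ hrkx
  · have hkey := key hinj hab hcolab
    rw [← hdab] at hkey
    have hd1 : d ≠ 1 := by
      rw [hdab]
      simpa [mul_inv_eq_one] using hab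
    have hkn : tagO (rk idx d) ∈ n := by rwa [hcola₀] at hkey
    have hrkd_ne : rk idx d ≠ γ := by
      intro hrd
      rw [hrd, htag] at hkn
      have := foldr_max_lt hkn
      omega
    by_cases hx1 : x = 1
    · rw [hx1, one_mul] at hxd
      exact hrkd_ne (by rw [hxd, hrkt])
    · rcases lt_trichotomy (rk idx d) (rk idx x) with hlt1 | heq1 | hgt1
      · -- rk t = rk x < γ
        have : rk idx (x * d) = rk idx x := rk_mul hinj hx1 hd1 hlt1
        rw [hxd, hrkt] at this
        rw [← this] at hrkx
        exact lt_irrefl _ hrkx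
      · -- equal ranks: t ∈ H (rk x + 1), so rk t ≤ rk x < γ
        have hmem : x * d ∈ Hch idx (rk idx x + 1) := by
          apply mul_mem (rk_spec hinj x)
          rw [← heq1]
          exact rk_spec hinj d
        have : rk idx t ≤ rk idx x := by
          rw [← hxd]
          exact rk_le hmem
        rw [hrkt] at this
        exact absurd (lt_of_le_of_lt this hrkx) (lt_irrefl _)
      · -- rk t = rk d = γ : tag contradiction
        have h2 : rk idx (d⁻¹ * x⁻¹) = rk idx d⁻¹ := by
          apply rk_mul hinj (inv_ne_one.2 hd1) (inv_ne_one.2 hx1)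
          rw [rk_inv, rk_inv]
          exact hgt1
        have h3 : rk idx (x * d) = rk idx d := by
          have h4 : (x * d)⁻¹ = d⁻¹ * x⁻¹ := by group
          rw [← rk_inv (x * d), h4, h2, rk_inv]
        rw [hxd, hrkt] at h3
        exact hrkd_ne h3.symm

variable {G : Type u} [Group G] {idx : G → Ordinal.{u}}

lemma exists_infinite_fiber (hunc : ℵ₀ < #G) (col : G → List ℕ) :
    ∃ s, (col ⁻¹' {s}).Infinite := by
  by_contra h
  push_neg at h
  have hcnt : (Set.univ : Set G).Countable := by
    have huniv : (Set.univ : Set G) = ⋃ s : List ℕ, col ⁻¹' {s} := by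
      ext g; simp
    rw [huniv]
    exact Set.countable_iUnion fun s => (h s).countable
  haveI : Countable G := Set.countable_univ_iff.1 hcnt
  exact absurd Cardinal.mk_le_aleph0 (not_le.2 hunc)

end PCV

/-- Every infinite group `G` whose cardinality is a regular cardinal admits a partition
into countably many cells `A n` with `cov (A n * (A n)⁻¹) = #G` for every `n`. -/
theorem partition_cov_eq_card_of_regular {G : Type*} [Group G] [Infinite G]
    (hreg : (#G).IsRegular) :
    ∃ A : ℕ → Set G,
      (⋃ n, A n) = Set.univ ∧
      (∀ m n, m ≠ n → Disjoint (A m) (A n)) ∧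
      ∀ n, cov (A n * (A n)⁻¹) = #G := by
  classical
  rcases eq_or_lt_of_le hreg.1 with haleph | hunc
  · -- countable case: partition into singletons
    haveI : Countable G := Cardinal.mk_le_aleph0_iff.1 (le_of_eq haleph.symm)
    haveI : Encodable G := Encodable.ofCountable G
    haveI : Denumerable G := Denumerable.ofEncodableOfInfinite G
    set q : ℕ ≃ G := (Denumerable.eqv G).symm with hq
    refine ⟨fun n => {q n}, ?_, ?_, ?_⟩
    · apply Set.eq_univ_of_forall
      intro g
      exact Set.mem_iUnion.2 ⟨q.symm g, by simp⟩
    · intro m n hmn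
      exact Set.disjoint_singleton.2 fun h => hmn (q.injective h)
    · intro n
      have hset : ({q n} : Set G) * ({q n} : Set G)⁻¹ = {(1 : G)} := by
        rw [Set.inv_singleton, Set.singleton_mul_singleton, mul_inv_cancel]
      rw [hset]
      have hone : {c : Cardinal | ∃ X : Set G, #X = c ∧ X * {1} = Set.univ} = {#G} := by
        ext c
        simp only [Set.mem_setOf_eq, Set.mem_singleton_iff]
        constructor
        · rintro ⟨X, rfl, hX⟩
          rw [Set.singleton_one, mul_one] at hX
          rw [hX, Cardinal.mk_univ]
        · rintro rfl
          exact ⟨Set.univ, Cardinal.mk_univ, by rw [Set.singleton_one, mul_one]⟩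
      rw [cov, hone, csInf_singleton]
  · -- uncountable case
    haveI hwo : IsWellOrder (#G).ord.ToType (· < ·) := isWellOrder_lt
    obtain ⟨e⟩ := Cardinal.eq.1 (Cardinal.mk_ord_toType #G)
    set idx : G → Ordinal := fun g =>
      Ordinal.typein (α := (#G).ord.ToType) (· < ·) (e.symm g) with hidx
    have hinj : Function.Injective idx := fun a b h =>
      e.symm.injective (Ordinal.typein_injective _ h)
    have hlt : ∀ g : G, idx g < (#G).ord := fun g => by
      have := Ordinal.typein_lt_type ((· < ·) : (#G).ord.ToType → (#G).ord.ToType → Prop)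
        (e.symm g)
      rwa [Ordinal.type_toType] at this
    obtain ⟨s₀, hs₀⟩ := PCV.exists_infinite_fiber hunc (PCV.colF idx)
    haveI := hs₀.to_subtype
    set j : ℕ → G := fun n => ((Infinite.natEmbedding (PCV.colF idx ⁻¹' {s₀} : Set G)) n : G)
      with hj
    have hjinj : Function.Injective j := fun a b h =>
      (Infinite.natEmbedding _).injective (Subtype.coe_injective h)
    have hjmem : ∀ m, PCV.colF idx (j m) = s₀ := fun m =>
      ((Infinite.natEmbedding (PCV.colF idx ⁻¹' {s₀} : Set G)) m).2
    set τ : ℕ ≃ List ℕ := (Denumerable.eqv (List ℕ)).symm with hτ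
    set Bad : Set ℕ := {m | PCV.colF idx ⁻¹' {τ m} = ∅ ∨ τ m = s₀} with hBad
    set m₀ : ℕ := τ.symm s₀ with hm₀def
    have hτm₀ : τ m₀ = s₀ := τ.apply_symm_apply s₀
    have hm₀Bad : m₀ ∈ Bad := Or.inr hτm₀
    set P : ℕ → Set G := fun m =>
      if m = m₀ then (PCV.colF idx ⁻¹' {s₀}) \ (j '' (Bad \ {m₀}))
      else if m ∈ Bad then {j m} else PCV.colF idx ⁻¹' {τ m} with hP
    have hPm₀ : P m₀ = (PCV.colF idx ⁻¹' {s₀}) \ (j '' (Bad \ {m₀})) := by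
      rw [hP]; simp only [eq_self_iff_true, if_true]
    have hPBad : ∀ m, m ≠ m₀ → m ∈ Bad → P m = {j m} := by
      intro m h1 h2; rw [hP]; simp only [if_neg h1, if_pos h2]
    have hPgood : ∀ m, m ∉ Bad → P m = PCV.colF idx ⁻¹' {τ m} := by
      intro m h2
      have h1 : m ≠ m₀ := fun he => h2 (he ▸ hm₀Bad)
      rw [hP]; simp only [if_neg h1, if_neg h2]
    -- each cell is inside a colour fibre
    have hPsub : ∀ m, ∃ s, P m ⊆ PCV.colF idx ⁻¹' {s} := by
      intro m
      by_cases h1 : m = m₀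
      · subst h1; exact ⟨s₀, by rw [hPm₀]; exact Set.diff_subset⟩
      · by_cases h2 : m ∈ Bad
        · exact ⟨s₀, by rw [hPBad m h1 h2]; exact Set.singleton_subset_iff.2 (hjmem m)⟩
        · exact ⟨τ m, by rw [hPgood m h2]⟩
    -- each cell is nonempty
    have hPne : ∀ m, (P m).Nonempty := by
      intro m
      by_cases h1 : m = m₀
      · subst h1
        refine ⟨j m₀, ?_⟩
        rw [hPm₀]
        refine ⟨hjmem m₀, fun hc => ?_⟩
        obtain ⟨m', hm', he⟩ := hc
        exact hm'.2 (hjinj he)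
      · by_cases h2 : m ∈ Bad
        · exact ⟨j m, by rw [hPBad m h1 h2]; exact Set.mem_singleton _⟩
        · rw [hPgood m h2]
          apply Set.nonempty_iff_ne_empty.2
          intro hc
          exact h2 (Or.inl hc)
    refine ⟨P, ?_, ?_, ?_⟩
    · -- covers
      apply Set.eq_univ_of_forall
      intro g
      by_cases hss : PCV.colF idx g = s₀
      · by_cases hg : g ∈ j '' (Bad \ {m₀})
        · obtain ⟨m', hm', rfl⟩ := hg
          refine Set.mem_iUnion.2 ⟨m', ?_⟩
          have hm'2 : m' ≠ m₀ := fun h => hm'.2 (by rw [h]; exact Set.mem_singleton _)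
          rw [hPBad m' hm'2 hm'.1]
          exact Set.mem_singleton _
        · exact Set.mem_iUnion.2 ⟨m₀, by rw [hPm₀]; exact ⟨hss, hg⟩⟩
      · set m := τ.symm (PCV.colF idx g) with hmdef
        have hτm : τ m = PCV.colF idx g := τ.apply_symm_apply _
        have hmB : m ∉ Bad := by
          intro hB
          rcases hB with hB | hB
          · rw [hτm] at hB
            exact absurd hB (Set.nonempty_iff_ne_empty.1 ⟨g, rfl⟩)
          · rw [hτm] at hB
            exact hss hB
        refine Set.mem_iUnion.2 ⟨m, ?_⟩
        rw [hPgood m hmB, Set.mem_preimage, hτm]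
        exact rfl
    · -- disjoint
      intro m n hmn
      rw [Set.disjoint_left]
      intro g hgm hgn
      -- helper : membership in a "B-type" cell forces colour s₀ and g in specific place
      by_cases h1m : m = m₀
      · subst h1m
        rw [hPm₀] at hgm
        by_cases h1n : n ∈ Bad
        · have hnm₀ : n ≠ m₀ := fun he => hmn (he ▸ rfl)
          rw [hPBad n hnm₀ h1n] at hgn
          exact hgm.2 ⟨n, ⟨h1n, hnm₀⟩, hgn.symm⟩
        · rw [hPgood n h1n, Set.mem_preimage, Set.mem_singleton_iff] at hgn
          apply h1n
          have hgm1 : PCV.colF idx g = s₀ := hgm.1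
          exact Or.inr (hgn.symm.trans hgm1)
      · by_cases h2m : m ∈ Bad
        · rw [hPBad m h1m h2m] at hgm
          rw [Set.mem_singleton_iff] at hgm
          by_cases h1n : n = m₀
          · subst h1n
            rw [hPm₀] at hgn
            exact hgn.2 ⟨m, ⟨h2m, h1m⟩, hgm.symm⟩
          · by_cases h2n : n ∈ Bad
            · rw [hPBad n h1n h2n, Set.mem_singleton_iff] at hgn
              exact hmn (hjinj (hgm.symm.trans hgn))
            · rw [hPgood n h2n, Set.mem_preimage, Set.mem_singleton_iff] at hgn
              apply h2n
              rw [hgm, hjmem m] at hgn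
              exact Or.inr hgn.symm
        · rw [hPgood m h2m, Set.mem_preimage, Set.mem_singleton_iff] at hgm
          by_cases h1n : n = m₀
          · subst h1n
            rw [hPm₀] at hgn
            apply h2m
            exact Or.inr (by rw [← hgm]; exact hgn.1)
          · by_cases h2n : n ∈ Bad
            · rw [hPBad n h1n h2n, Set.mem_singleton_iff] at hgn
              apply h2m
              rw [hgn, hjmem n] at hgm
              exact Or.inr hgm.symm
            · rw [hPgood n h2n, Set.mem_preimage, Set.mem_singleton_iff] at hgn
              exact hmn (τ.injective (hgm.symm.trans hgn))
    · -- covering numbers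
      intro m
      obtain ⟨s, hs⟩ := hPsub m
      apply PCV.cov_of_mono hinj hlt hreg hunc (P m) (hPne m)
      intro a ha b hb
      have h1 := hs ha
      have h2 := hs hb
      rw [Set.mem_preimage, Set.mem_singleton_iff] at h1 h2
      rw [h1, h2]
end

section
/- Let $\lambda,\varkappa$ be infinite cardinals with $\lambda<\varkappa$, and let $\{H_\alpha:\alpha<\varkappa\}$ be a family of groups with $|H_\alpha|\le\lambda$ for each $\alpha<\varkappa$. Let $G$ be a subgroup of the restricted direct product (direct sum) $H=\bigotimes_{\alpha<\varkappa}H_\alpha$ with $|G|=\varkappa$. Then there exists a partition of $G$ into countably many cells $G=\bigcup_{n\in\omega}A_n$ such that $cov(A_nA_n^{-1})=\varkappa$ for each $n\in\omega$. -/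
open Cardinal Pointwise

/-- The restricted direct product (direct sum) of a family of groups: the subgroup of the
full product consisting of elements with all but finitely many coordinates the identity. -/
def restrictedProduct {ι : Type*} (H : ι → Type*) [∀ i, Group (H i)] :
    Subgroup (∀ i, H i) where
  carrier := {f | {i | f i ≠ 1}.Finite}
  one_mem' := by simp
  mul_mem' := by
    intro a b ha hb
    apply (ha.union hb).subset
    intro i hi
    by_contra h
    simp only [Set.mem_union, Set.mem_setOf_eq, not_or, not_not] at h
    exact hi (by simp [h.1, h.2])
  inv_mem' := by
    intro a ha
    apply ha.subset
    intro i hi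
    simp only [Set.mem_setOf_eq, Pi.inv_apply, ne_eq, inv_eq_one] at hi
    exact hi

namespace RPaux

open scoped Classical

universe u
variable {ι : Type u} {H : ι → Type u} [∀ i, Group (H i)]
  {G : Subgroup ↥(restrictedProduct H)}

/-- The underlying function of an element of the subgroup. -/
def f (g : G) (i : ι) : H i := g.1.1 i

lemma f_mul (g h : G) (i : ι) : f (g * h) i = f g i * f h i := rfl
lemma f_inv (g : G) (i : ι) : f g⁻¹ i = (f g i)⁻¹ := rfl
lemma f_one (i : ι) : f (1 : G) i = 1 := rfl

lemma f_injective : Function.Injective (f (G := G)) := by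
  intro a b hab
  ext i
  exact congrFun hab i

lemma supp_finite (g : G) : {i | f g i ≠ 1}.Finite := g.1.2

noncomputable def suppF (g : G) : Finset ι := (supp_finite g).toFinset

lemma mem_suppF {g : G} {i : ι} : i ∈ suppF g ↔ f g i ≠ 1 := (supp_finite g).mem_toFinset

noncomputable def sz (g : G) : ℕ := (suppF g).card

lemma suppF_inv (g : G) : suppF g⁻¹ = suppF g := by
  ext i
  simp [mem_suppF, f_inv]

lemma sz_inv (g : G) : sz g⁻¹ = sz g := by
  unfold sz; rw [suppF_inv]

lemma suppF_mul_subset (g h : G) : suppF (g * h) ⊆ suppF g ∪ suppF h := by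
  intro i hi
  rw [mem_suppF, f_mul] at hi
  by_contra hc
  simp only [Finset.mem_union, mem_suppF, not_or, not_not] at hc
  rw [hc.1, hc.2, one_mul] at hi
  exact hi rfl

lemma sz_mul_le (g h : G) : sz (g * h) ≤ sz g + sz h :=
  le_trans (Finset.card_le_card (suppF_mul_subset g h)) (Finset.card_union_le _ _)

lemma mk_finset_le' (α : Type u) : #(Finset α) ≤ max #α ℵ₀ := by
  rcases finite_or_infinite α with h | h
  · haveI := h
    haveI := Fintype.ofFinite α
    exact le_max_of_le_right (lt_aleph0_of_finite (Finset α)).le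
  · rw [mk_finset_of_infinite]
    exact le_max_left _ _

section Counting

variable {lam kap : Cardinal.{u}}

/-- Counting lemma A: the set of elements supported inside a small set `C` is small. -/
lemma mk_small_support (hlam : ℵ₀ ≤ lam) (hkap : ℵ₀ ≤ kap) (hlt : lam < kap)
    (hH : ∀ i, #(H i) ≤ lam) (C : Set ι) (hC : #C < kap) :
    #{g : G | ∀ i, f g i ≠ 1 → i ∈ C} < kap := by
  classical
  set Z := {g : G | ∀ i, f g i ≠ 1 → i ∈ C} with hZ
  -- injection into finsets of pairs
  let e : Z → Finset (Σ i : C, H ↑i) := fun g =>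
    ((suppF g.1).subtype (· ∈ C)).image (fun i => ⟨⟨i.1, i.2⟩, f g.1 i.1⟩)
  have hmem : ∀ (g : Z) (i : ι) (hi : i ∈ C), f g.1 i ≠ 1 →
      (⟨⟨i, hi⟩, f g.1 i⟩ : Σ i : C, H ↑i) ∈ e g := by
    intro g i hi hne
    apply Finset.mem_image.2
    refine ⟨⟨i, hi⟩, ?_, rfl⟩
    rw [Finset.mem_subtype]
    exact mem_suppF.2 hne
  have hkey : ∀ g g' : Z, e g = e g' → ∀ i (hi : i ∈ C), f g.1 i ≠ 1 → f g'.1 i = f g.1 i := by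
    intro g g' he i hi hne
    have h1 : (⟨⟨i, hi⟩, f g.1 i⟩ : Σ i : C, H ↑i) ∈ e g' := he ▸ hmem g i hi hne
    rcases Finset.mem_image.1 h1 with ⟨j, _, hj⟩
    rcases j with ⟨j, hjC⟩
    have hfst : j = i := congrArg (fun p => (Sigma.fst p).1) hj
    subst hfst
    have := (Sigma.mk.inj_iff.1 hj).2
    exact (eq_of_heq this)
  have hinj : Function.Injective e := by
    intro g g' he
    apply Subtype.ext
    apply f_injective
    funext i
    by_cases hi : i ∈ C
    · by_cases h1 : f g.1 i ≠ 1
      · exact (hkey g g' he i hi h1).symm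
      · by_cases h2 : f g'.1 i ≠ 1
        · exact (hkey g' g he.symm i hi h2)
        · push_neg at h1 h2
          rw [h1, h2]
    · have e1 : ¬ f g.1 i ≠ 1 := fun h => hi (g.2 i h)
      have e2 : ¬ f g'.1 i ≠ 1 := fun h => hi (g'.2 i h)
      push_neg at e1 e2
      rw [e1, e2]
  calc #Z ≤ #(Finset (Σ i : C, H ↑i)) := mk_le_of_injective hinj
    _ ≤ max (#(Σ i : C, H ↑i)) ℵ₀ := mk_finset_le' _
    _ < kap := by
        apply max_lt _ (lt_of_le_of_lt hlam hlt)
        calc #(Σ i : C, H ↑i) = sum (fun i : C => #(H ↑i)) := mk_sigma _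
          _ ≤ sum (fun _ : C => lam) := sum_le_sum _ _ (fun i => hH i.1)
          _ = #C * lam := sum_const' _ _
          _ < kap := mul_lt_of_lt hkap hC hlt

/-- Counting lemma B1: the subgroup of elements trivial on a finite set `D` is large. -/
lemma mk_trivial_on_finset (hlam : ℵ₀ ≤ lam) (hkap : ℵ₀ ≤ kap) (hlt : lam < kap)
    (hH : ∀ i, #(H i) ≤ lam) (hG : #G = kap) (D : Finset ι) :
    kap ≤ #{g : G | ∀ i ∈ D, f g i = 1} := by
  classical
  set K := {g : G | ∀ i ∈ D, f g i = 1} with hK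
  by_contra hc
  push_neg at hc
  let ψ : G → (∀ i : D, H ↑i) := fun g i => f g i.1
  let R := Set.range ψ
  have hsec : ∀ r : R, ∃ g : G, ψ g = r.1 := fun r => r.2
  let sec : R → G := fun r => (hsec r).choose
  have hsecspec : ∀ r : R, ψ (sec r) = r.1 := fun r => (hsec r).choose_spec
  let Φ : G → R × K := fun g =>
    ⟨⟨ψ g, ⟨g, rfl⟩⟩, ⟨g * (sec ⟨ψ g, ⟨g, rfl⟩⟩)⁻¹, by
      intro i hi
      have hs : ψ (sec ⟨ψ g, ⟨g, rfl⟩⟩) = ψ g := hsecspec ⟨ψ g, ⟨g, rfl⟩⟩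
      have : f (sec ⟨ψ g, ⟨g, rfl⟩⟩) i = f g i := congrFun hs ⟨i, hi⟩
      rw [f_mul, f_inv, this, mul_inv_cancel]⟩⟩
  have hΦinj : Function.Injective Φ := by
    intro g g' h
    have h1 : ψ g = ψ g' := congrArg (fun p => p.1.1) h
    have h2 : g * (sec ⟨ψ g, ⟨g, rfl⟩⟩)⁻¹ = g' * (sec ⟨ψ g', ⟨g', rfl⟩⟩)⁻¹ :=
      congrArg (fun p => p.2.1) h
    have h3 : (⟨ψ g, ⟨g, rfl⟩⟩ : R) = ⟨ψ g', ⟨g', rfl⟩⟩ := Subtype.ext h1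
    rw [h3] at h2
    exact mul_right_cancel h2
  have hbound : kap ≤ lam * #K := by
    calc kap = #G := hG.symm
      _ ≤ #(R × K) := mk_le_of_injective hΦinj
      _ = #R * #K := (Cardinal.mul_def _ _).symm
      _ ≤ lam * #K := by
          apply mul_le_mul' _ le_rfl
          calc #R ≤ #(∀ i : D, H ↑i) := mk_set_le _
            _ = prod (fun i : D => #(H ↑i)) := mk_pi _
            _ ≤ prod (fun _ : D => lam) := prod_le_prod _ _ (fun i => hH i.1)
            _ = lam ^ #D := prod_const' _ _
            _ ≤ lam := Cardinal.pow_le hlam (lt_aleph0_of_finite _)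
  exact absurd hbound (not_le.2 (mul_lt_of_lt hkap hlt hc))

/-- Lemma B: there is an element trivial on `D` with a support point outside `C`. -/
lemma exists_trivial_on_with_support_outside (hlam : ℵ₀ ≤ lam) (hkap : ℵ₀ ≤ kap)
    (hlt : lam < kap) (hH : ∀ i, #(H i) ≤ lam) (hG : #G = kap)
    (C : Set ι) (hC : #C < kap) (D : Finset ι) :
    ∃ h : G, (∀ i ∈ D, f h i = 1) ∧ ∃ j, j ∉ C ∧ f h j ≠ 1 := by
  by_contra hcon
  push_neg at hcon
  have hsub : {g : G | ∀ i ∈ D, f g i = 1} ⊆ {g : G | ∀ i, f g i ≠ 1 → i ∈ C} := by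
    intro g hg i hne
    by_contra hiC
    exact hne (hcon g hg i hiC)
  have h1 := mk_trivial_on_finset hlam hkap hlt hH hG D
  have h2 := mk_small_support (G := G) hlam hkap hlt hH C hC
  exact absurd (h1.trans (mk_le_mk_of_subset hsub)) (not_le.2 h2)

/-- Key lemma: for any small `C` there is an element with `m` support points outside `C`. -/
lemma exists_large_support_outside (hlam : ℵ₀ ≤ lam) (hkap : ℵ₀ ≤ kap) (hlt : lam < kap)
    (hH : ∀ i, #(H i) ≤ lam) (hG : #G = kap) (m : ℕ) (C : Set ι) (hC : #C < kap) :
    ∃ (g : G) (T : Finset ι), T.card = m ∧ ∀ i ∈ T, f g i ≠ 1 ∧ i ∉ C := by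
  classical
  induction m with
  | zero => exact ⟨1, ∅, rfl, by simp⟩
  | succ m ih =>
    rcases ih with ⟨g, T, hTcard, hT⟩
    have hC' : #(C ∪ {i | f g i ≠ 1} : Set ι) < kap := by
      apply lt_of_le_of_lt (mk_union_le _ _)
      exact add_lt_of_lt hkap hC (lt_of_lt_of_le (supp_finite g).lt_aleph0
        (le_trans hlam hlt.le))
    rcases exists_trivial_on_with_support_outside hlam hkap hlt hH hG
        (C ∪ {i | f g i ≠ 1}) hC' (suppF g) with ⟨h, hhD, j, hjC, hjne⟩
    have hjC1 : j ∉ C := fun hj => hjC (Set.mem_union_left _ hj)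
    have hjg : f g j = 1 := by
      by_contra hne
      exact hjC (Set.mem_union_right _ hne)
    refine ⟨g * h, insert j T, ?_, ?_⟩
    · rw [Finset.card_insert_of_notMem, hTcard]
      intro hjT
      exact hjC (Set.mem_union_right _ (hT j hjT).1)
    · intro i hi
      rcases Finset.mem_insert.1 hi with rfl | hiT
      · constructor
        · rw [f_mul, hjg, one_mul]; exact hjne
        · exact hjC1
      · rcases hT i hiT with ⟨hine, hiC⟩
        constructor
        · rw [f_mul, hhD i (mem_suppF.2 hine), mul_one]; exact hine
        · exact hiC

/-- Covering lemma: no small set of translates of a set of bounded support size covers `G`. -/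
lemma exists_not_covered (hlam : ℵ₀ ≤ lam) (hkap : ℵ₀ ≤ kap) (hlt : lam < kap)
    (hH : ∀ i, #(H i) ≤ lam) (hG : #G = kap) (M : ℕ) (X : Set G) (hX : #X < kap) :
    ∃ g : G, ∀ x ∈ X, ∀ s : G, x * s = g → M < sz s := by
  classical
  set C : Set ι := ⋃ x : X, {i | f x.1 i ≠ 1} with hCdef
  have hC : #C < kap := by
    calc #C ≤ sum (fun x : X => #{i | f x.1 i ≠ 1}) := mk_iUnion_le_sum_mk
      _ ≤ sum (fun _ : X => ℵ₀) := sum_le_sum _ _ (fun x => (supp_finite x.1).lt_aleph0.le)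
      _ = #X * ℵ₀ := sum_const' _ _
      _ < kap := mul_lt_of_lt hkap hX (lt_of_le_of_lt hlam hlt)
  rcases exists_large_support_outside hlam hkap hlt hH hG (M + 1) C hC with
    ⟨g, T, hTcard, hT⟩
  refine ⟨g, fun x hx s hxs => ?_⟩
  have hTs : T ⊆ suppF s := by
    intro i hi
    rcases hT i hi with ⟨hgi, hiC⟩
    have hxi : f x i = 1 := by
      by_contra hne
      exact hiC (Set.mem_iUnion.2 ⟨⟨x, hx⟩, hne⟩)
    have hs : s = x⁻¹ * g := by rw [← hxs]; group
    rw [mem_suppF, hs, f_mul, f_inv, hxi, inv_one, one_mul]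
    exact hgi
  have : M + 1 ≤ sz s := hTcard ▸ Finset.card_le_card hTs
  omega

end Counting

end RPaux

/-- If `λ < κ` are infinite cardinals, `{H α : α < κ}` is a family of groups each of
cardinality `≤ λ`, and `G` is a subgroup of the restricted direct product of the `H α`
with `|G| = κ`, then `G` admits a partition into countably many cells `A n` with
`cov (A n * (A n)⁻¹) = κ` for every `n`. -/
theorem partition_cov_eq_card_subgroup_restricted_product {ι : Type u} (H : ι → Type u)
    [∀ i, Group (H i)] (lam kap : Cardinal.{u})
    (hlam : ℵ₀ ≤ lam) (hkap : ℵ₀ ≤ kap) (hlt : lam < kap)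
    (hι : #ι = kap) (hH : ∀ i, #(H i) ≤ lam)
    (G : Subgroup ↥(restrictedProduct H)) (hG : #G = kap) :
    ∃ A : ℕ → Set G,
      (⋃ n, A n) = Set.univ ∧
      (∀ m n, m ≠ n → Disjoint (A m) (A n)) ∧
      ∀ n, cov (A n * (A n)⁻¹) = kap := by
  classical
  open RPaux in
  -- support sizes are unbounded
  have hunb : ∀ m : ℕ, ∃ g : G, m ≤ RPaux.sz g := by
    intro m
    have hempty : #(∅ : Set ι) < kap := by
      rw [Cardinal.mk_emptyCollection]
      exact lt_of_lt_of_le Cardinal.aleph0_pos hkap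
    rcases RPaux.exists_large_support_outside (G := G) hlam hkap hlt hH hG m ∅ hempty with
      ⟨g, T, hTcard, hT⟩
    refine ⟨g, ?_⟩
    have hsub : T ⊆ RPaux.suppF g := fun i hi => RPaux.mem_suppF.2 (hT i hi).1
    calc m = T.card := hTcard.symm
      _ ≤ (RPaux.suppF g).card := Finset.card_le_card hsub
  let u : ℕ → G := fun m => (hunb m).choose
  have hu : ∀ m, m ≤ RPaux.sz (u m) := fun m => (hunb m).choose_spec
  let t : ℕ → ℕ := fun n => Nat.rec 0 (fun _ p => RPaux.sz (u p) + 1) n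
  have ht0 : t 0 = 0 := rfl
  have hts : ∀ n, t (n + 1) = RPaux.sz (u (t n)) + 1 := fun n => rfl
  have htlt : ∀ n, t n < t (n + 1) := fun n => by
    rw [hts]
    exact Nat.lt_succ_of_le (hu (t n))
  have tmono : StrictMono t := strictMono_nat_of_lt_succ htlt
  set A : ℕ → Set G := fun n => {g | t n ≤ RPaux.sz g ∧ RPaux.sz g < t (n + 1)} with hA
  have hloc : ∀ v : ℕ, ∃ n, t n ≤ v ∧ v < t (n + 1) := by
    intro v
    induction v with
    | zero => exact ⟨0, le_of_eq ht0, ht0 ▸ htlt 0⟩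
    | succ v ih =>
      rcases ih with ⟨n, h1, h2⟩
      by_cases h : v + 1 < t (n + 1)
      · exact ⟨n, by omega, h⟩
      · refine ⟨n + 1, by omega, ?_⟩
        have := htlt (n + 1)
        omega
  have hwmem : ∀ n, u (t n) ∈ A n := by
    intro n
    refine ⟨hu (t n), ?_⟩
    rw [hts]
    exact Nat.lt_succ_of_le le_rfl
  have hdis : ∀ m n, m < n → Disjoint (A m) (A n) := by
    intro m n hmn
    rw [Set.disjoint_left]
    rintro g ⟨_, hg2⟩ ⟨hg3, _⟩
    have : t (m + 1) ≤ t n := tmono.monotone (Nat.succ_le_of_lt hmn)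
    omega
  refine ⟨A, ?_, ?_, ?_⟩
  · rw [Set.eq_univ_iff_forall]
    intro g
    rcases hloc (RPaux.sz g) with ⟨n, h1, h2⟩
    exact Set.mem_iUnion.2 ⟨n, h1, h2⟩
  · intro m n hmn
    rcases lt_or_gt_of_ne hmn with h | h
    · exact hdis m n h
    · exact (hdis n m h).symm
  · intro n
    set S : Set G := A n * (A n)⁻¹ with hS
    have hSbound : ∀ s ∈ S, RPaux.sz s ≤ 2 * t (n + 1) := by
      intro s hs
      rcases Set.mem_mul.1 hs with ⟨x, hx, y, hy, hxy⟩
      have hy' : y⁻¹ ∈ A n := Set.mem_inv.1 hy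
      have h1 : RPaux.sz (x * y) ≤ RPaux.sz x + RPaux.sz y := RPaux.sz_mul_le x y
      have h2 : RPaux.sz y = RPaux.sz y⁻¹ := (RPaux.sz_inv y).symm
      have hx2 : RPaux.sz x < t (n + 1) := hx.2
      have hy2 : RPaux.sz y⁻¹ < t (n + 1) := hy'.2
      rw [← hxy]
      omega
    have h1S : (1 : G) ∈ S := by
      refine Set.mem_mul.2 ⟨u (t n), hwmem n, (u (t n))⁻¹, ?_, mul_inv_cancel _⟩
      rw [Set.mem_inv, inv_inv]
      exact hwmem n
    have kapmem : kap ∈ {c : Cardinal | ∃ X : Set G, #X = c ∧ X * S = Set.univ} := by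
      refine ⟨Set.univ, by rw [Cardinal.mk_univ, hG], ?_⟩
      rw [Set.eq_univ_iff_forall]
      intro z
      exact Set.mem_mul.2 ⟨z, Set.mem_univ z, 1, h1S, mul_one z⟩
    have hlow : ∀ c ∈ {c : Cardinal | ∃ X : Set G, #X = c ∧ X * S = Set.univ}, kap ≤ c := by
      rintro c ⟨X, hXc, hXcov⟩
      rw [← hXc]
      by_contra hcon
      push_neg at hcon
      rcases RPaux.exists_not_covered hlam hkap hlt hH hG (2 * t (n + 1)) X hcon with ⟨g, hg⟩
      have hgmem : g ∈ X * S := by rw [hXcov]; exact Set.mem_univ g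
      rcases Set.mem_mul.1 hgmem with ⟨x, hx, s, hs, hxs⟩
      have hbig := hg x hx s hxs
      have hsmall := hSbound s hs
      omega
    show sInf {c : Cardinal | ∃ X : Set G, #X = c ∧ X * S = Set.univ} = kap
    exact le_antisymm (csInf_le' kapmem) (le_csInf ⟨kap, kapmem⟩ hlow)
end

section
/- Every infinite Abelian group $G$ of cardinality $\varkappa$ can be partitioned into countably many cells $G=\bigcup_{n\in\omega}A_n$ such that $cov(A_n-A_n)=\varkappa$ for each $n\in\omega$. -/
open Cardinal Pointwise

/-- The covering number of a subset `A` of an additive group `G`: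
the least cardinality of a set `X ⊆ G` with `X + A = G`. -/
noncomputable def covAdd {G : Type*} [AddGroup G] (A : Set G) : Cardinal :=
  sInf {c : Cardinal | ∃ X : Set G, #X = c ∧ X + A = Set.univ}

namespace CovPartitionProof

universe u

/-! ### Cardinal helpers -/

theorem mk_image2_le {α β γ : Type u} (f : α → β → γ) (s : Set α) (t : Set β) :
    #(Set.image2 f s t) ≤ #s * #t := by
  rw [← Set.image_prod]
  refine Cardinal.mk_image_le.trans ?_
  rw [Cardinal.mk_congr (Equiv.Set.prod s t), Cardinal.mk_prod, Cardinal.lift_id,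
    Cardinal.lift_id]

theorem mk_add_le {G : Type u} [AddGroup G] (X B : Set G) : #(X + B) ≤ #X * #B := by
  rw [← Set.image2_add]; exact mk_image2_le _ _ _

theorem mk_sub_le' {G : Type u} [AddGroup G] (X B : Set G) : #(X - B) ≤ #X * #B := by
  rw [← Set.image2_sub]; exact mk_image2_le _ _ _

/-! ### covAdd lemmas -/

theorem covAdd_le_mk {G : Type u} [AddGroup G] {B X : Set G} (h : X + B = Set.univ) :
    covAdd B ≤ #X :=
  csInf_le (OrderBot.bddBelow _) ⟨X, rfl, h⟩

theorem covAdd_eq_mk {G : Type u} [AddGroup G] {B : Set G} (h0 : (0 : G) ∈ B)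
    (h : ∀ X : Set G, X + B = Set.univ → #G ≤ #X) : covAdd B = #G := by
  have huniv : Set.univ + B = Set.univ := by
    apply Set.eq_univ_of_forall
    intro x
    have := Set.add_mem_add (Set.mem_univ x) h0
    rwa [add_zero] at this
  apply le_antisymm
  · simpa [Cardinal.mk_univ] using covAdd_le_mk huniv
  · refine le_csInf ⟨#(Set.univ : Set G), Set.univ, rfl, huniv⟩ ?_
    rintro c ⟨X, rfl, hX⟩
    exact h X hX

/-- The statement we are proving for a group. -/
def GoodPartition (G : Type u) [AddCommGroup G] : Prop :=
  ∃ A : ℕ → Set G, (⋃ n, A n) = Set.univ ∧ (∀ m n, m ≠ n → Disjoint (A m) (A n)) ∧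
    ∀ n, covAdd (A n - A n) = #G

/-! ### Transfer along a surjective homomorphism -/

theorem goodPartition_transfer {G K : Type u} [AddCommGroup G] [AddCommGroup K]
    (φ : G →+ K) (hφ : Function.Surjective φ) (hcard : #K = #G)
    (hK : GoodPartition K) : GoodPartition G := by
  obtain ⟨B, hBu, hBd, hBc⟩ := hK
  refine ⟨fun n => φ ⁻¹' B n, ?_, ?_, ?_⟩
  · rw [← Set.preimage_iUnion, hBu, Set.preimage_univ]
  · intro m n hmn
    exact (hBd m n hmn).preimage φ
  · intro n
    have hBne : (B n).Nonempty := by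
      by_contra hne
      rw [Set.not_nonempty_iff_eq_empty] at hne
      have h1 : covAdd (B n - B n) = 0 := by
        rw [hne]
        have h2 : (∅ : Set K) - ∅ = ∅ := by simp
        rw [h2]
        have h3 : {c : Cardinal | ∃ X : Set K, #X = c ∧ X + (∅ : Set K) = Set.univ} = ∅ := by
          ext c
          simp only [Set.mem_setOf_eq, Set.mem_empty_iff_false, iff_false]
          rintro ⟨X, -, hX⟩
          rw [Set.add_empty] at hX
          exact Set.empty_ne_univ hX
        rw [covAdd, h3, Cardinal.sInf_empty]
      rw [hBc n] at h1
      exact Cardinal.mk_ne_zero K h1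
    obtain ⟨b0, hb0⟩ := hBne
    obtain ⟨a0, ha0⟩ := hφ b0
    have ha0' : a0 ∈ φ ⁻¹' B n := by
      simp only [Set.mem_preimage, ha0]; exact hb0
    apply covAdd_eq_mk
    · have := Set.sub_mem_sub ha0' ha0'
      rwa [sub_self] at this
    · intro X hX
      have hcov : (φ '' X) + (B n - B n) = Set.univ := by
        apply Set.eq_univ_of_forall
        intro k
        obtain ⟨g, rfl⟩ := hφ k
        have hg : g ∈ X + (φ ⁻¹' B n - φ ⁻¹' B n) := by rw [hX]; trivial
        obtain ⟨x, hx, w, hw, hxw⟩ := Set.mem_add.mp hg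
        obtain ⟨a, ha, b, hb, hab⟩ := Set.mem_sub.mp hw
        have hφg : φ g = φ x + (φ a - φ b) := by
          rw [← hxw, ← hab, map_add, map_sub]
        rw [hφg]
        exact Set.add_mem_add (Set.mem_image_of_mem φ hx) (Set.sub_mem_sub ha hb)
      have h1 : #K ≤ #(φ '' X) := by
        rw [← hBc n]; exact covAdd_le_mk hcov
      calc #G = #K := hcard.symm
        _ ≤ #(φ '' X) := h1
        _ ≤ #X := Cardinal.mk_image_le


theorem goodPartition_of_smallcof {G : Type u} [AddCommGroup G] [Infinite G]
    (g : ℕ → Cardinal.{u}) (hlt : ∀ n, g n < #G) (hsup : #G ≤ ⨆ n, g n) :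
    GoodPartition G := by
  classical
  have hℵ : ℵ₀ ≤ #G := Cardinal.infinite_iff.mp inferInstance
  have h1κ : (1 : Cardinal) < #G := lt_of_lt_of_le Cardinal.one_lt_aleph0 hℵ
  set g' : ℕ → Cardinal.{u} := fun n => max (g n) 1 with hg'
  have hg'lt : ∀ n, g' n < #G := fun n => max_lt (hlt n) h1κ
  set T : ℕ → Type u := fun n => (g' n).out with hTdef
  have hTmk : ∀ n, #(T n) = g' n := fun n => Cardinal.mk_out _
  have hTne : ∀ n, Nonempty (T n) := by
    intro n
    rw [← Cardinal.mk_ne_zero_iff, hTmk n]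
    intro h0
    have h1 : (1 : Cardinal) ≤ g' n := le_max_right _ _
    rw [h0] at h1
    exact absurd h1 (by simp)
  have hemb : ∀ n, Nonempty (T n ↪ G) := by
    intro n
    rw [← Cardinal.le_def, hTmk n]
    exact (hg'lt n).le
  have en : ∀ n, T n ↪ G := fun n => Classical.choice (hemb n)
  have hle1 : #(Σ n, T n) ≤ #G := by
    have hf : Function.Injective (fun p : Σ n, T n => ((p.1, en p.1 p.2) : ℕ × G)) := by
      rintro ⟨i, x⟩ ⟨j, y⟩ hpq
      simp only [Prod.mk.injEq] at hpq
      obtain ⟨rfl, h2⟩ := hpq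
      exact congrArg (Sigma.mk i) ((en i).injective h2)
    refine (Cardinal.mk_le_of_injective hf).trans ?_
    have hNG : #(ℕ × G) = ℵ₀ * #G := by
      rw [Cardinal.mk_prod]; simp
    rw [hNG, Cardinal.mul_eq_max le_rfl hℵ, max_eq_right hℵ]
  have hge : #G ≤ #(Σ n, T n) := by
    refine hsup.trans (ciSup_le ?_)
    intro n
    have h3 : #(T n) ≤ #(Σ n, T n) := Cardinal.mk_le_of_injective sigma_mk_injective
    exact le_trans (le_max_left _ _) (le_trans (hTmk n).symm.le h3)
  have hσ : #(Σ n, T n) = #G := le_antisymm hle1 hge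
  obtain ⟨e⟩ : Nonempty (G ≃ Σ n, T n) := Cardinal.eq.mp hσ.symm
  refine ⟨fun n => {x | (e x).1 = n}, ?_, ?_, ?_⟩
  · apply Set.eq_univ_of_forall
    intro x
    exact Set.mem_iUnion.mpr ⟨(e x).1, rfl⟩
  · intro m n hmn
    rw [Set.disjoint_left]
    rintro x hm hn
    exact hmn ((hm : _ = m).symm.trans (hn : _ = n))
  · intro n
    have hAcard : #({x : G | (e x).1 = n}) ≤ g' n := by
      have e1 : ↥({x : G | (e x).1 = n}) ≃ {p : Σ m, T m // p.1 = n} :=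
        e.subtypeEquiv fun a => Iff.rfl
      have e2 : {p : Σ m, T m // p.1 = n} ≃ T n :=
        { toFun := fun p => (congrArg T p.2) ▸ p.1.2
          invFun := fun t => ⟨⟨n, t⟩, rfl⟩
          left_inv := by rintro ⟨⟨m, t⟩, rfl⟩; rfl
          right_inv := fun t => rfl }
      rw [Cardinal.mk_congr (e1.trans e2), hTmk n]
    have hAne : ({x : G | (e x).1 = n}).Nonempty := by
      obtain ⟨t⟩ := hTne n
      refine ⟨e.symm ⟨n, t⟩, ?_⟩
      show (e (e.symm ⟨n, t⟩)).1 = n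
      rw [Equiv.apply_symm_apply]
    obtain ⟨a0, ha0⟩ := hAne
    apply covAdd_eq_mk
    · have := Set.sub_mem_sub ha0 ha0
      rwa [sub_self] at this
    · intro X hX
      by_contra hc
      rw [not_le] at hc
      have h1 : #(X + ({x : G | (e x).1 = n} - {x : G | (e x).1 = n})) ≤
          #X * (#({x : G | (e x).1 = n}) * #({x : G | (e x).1 = n})) :=
        (mk_add_le X _).trans (mul_le_mul_right (mk_sub_le' _ _) _)
      have h2 : #X * (#({x : G | (e x).1 = n}) * #({x : G | (e x).1 = n})) < #G :=
        Cardinal.mul_lt_of_lt hℵ hc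
          (Cardinal.mul_lt_of_lt hℵ (lt_of_le_of_lt hAcard (hg'lt n))
            (lt_of_le_of_lt hAcard (hg'lt n)))
      rw [hX, Cardinal.mk_univ] at h1
      exact absurd (h1.trans_lt h2) (lt_irrefl _)

variable {D : Type u} [AddCommGroup D]

/-! ### Sums over families of subgroups -/

/-- The set of elements expressible as a finite sum of elements of members of `F`. -/
def SumSet (F : Set (AddSubgroup D)) : Set D :=
  {x | ∃ L : List D, (∀ e ∈ L, ∃ C ∈ F, e ∈ C) ∧ L.sum = x}

theorem zero_mem_sumSet (F : Set (AddSubgroup D)) : (0 : D) ∈ SumSet F :=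
  ⟨[], by simp, rfl⟩

theorem sumSet_mono {F F' : Set (AddSubgroup D)} (h : F ⊆ F') : SumSet F ⊆ SumSet F' := by
  rintro x ⟨L, hL, rfl⟩
  refine ⟨L, fun e he => ?_, rfl⟩
  obtain ⟨C, hCF, heC⟩ := hL e he
  exact ⟨C, h hCF, heC⟩

theorem mem_sumSet_of_mem {F : Set (AddSubgroup D)} {C : AddSubgroup D} (hC : C ∈ F) {c : D}
    (hc : c ∈ C) : c ∈ SumSet F := by
  refine ⟨[c], ?_, by simp⟩
  intro e he
  rw [List.mem_singleton] at he
  exact ⟨C, hC, he ▸ hc⟩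

theorem add_mem_sumSet {F : Set (AddSubgroup D)} {x y : D} (hx : x ∈ SumSet F)
    (hy : y ∈ SumSet F) : x + y ∈ SumSet F := by
  obtain ⟨L, hL, rfl⟩ := hx
  obtain ⟨L', hL', rfl⟩ := hy
  refine ⟨L ++ L', ?_, by simp⟩
  intro e he
  rcases List.mem_append.mp he with h | h
  exacts [hL e h, hL' e h]

theorem list_sum_neg (L : List D) : (L.map Neg.neg).sum = -L.sum := by
  induction L with
  | nil => simp
  | cons a L ih => simp [ih, neg_add, add_comm]

theorem neg_mem_sumSet {F : Set (AddSubgroup D)} {x : D} (hx : x ∈ SumSet F) :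
    -x ∈ SumSet F := by
  obtain ⟨L, hL, rfl⟩ := hx
  refine ⟨L.map Neg.neg, ?_, list_sum_neg L⟩
  intro e he
  rw [List.mem_map] at he
  obtain ⟨a, ha, rfl⟩ := he
  obtain ⟨C, hCF, haC⟩ := hL a ha
  exact ⟨C, hCF, neg_mem haC⟩

theorem sub_mem_sumSet {F : Set (AddSubgroup D)} {x y : D} (hx : x ∈ SumSet F)
    (hy : y ∈ SumSet F) : x - y ∈ SumSet F := by
  rw [sub_eq_add_neg]
  exact add_mem_sumSet hx (neg_mem_sumSet hy)

theorem sumSet_exists_finset {F : Set (AddSubgroup D)} {x : D} (hx : x ∈ SumSet F) :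
    ∃ T : Finset (AddSubgroup D), ↑T ⊆ F ∧ x ∈ SumSet ↑T := by
  classical
  obtain ⟨L, hL, rfl⟩ := hx
  induction L with
  | nil => exact ⟨∅, by simp, by simpa using zero_mem_sumSet (∅ : Set (AddSubgroup D))⟩
  | cons a L ih =>
    obtain ⟨T, hT1, hT2⟩ := ih fun e he => hL e (List.mem_cons_of_mem a he)
    obtain ⟨C, hCF, haC⟩ := hL a (List.mem_cons_self)
    refine ⟨insert C T, ?_, ?_⟩
    · rw [Finset.coe_insert]
      exact Set.insert_subset hCF hT1
    · rw [List.sum_cons]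
      refine add_mem_sumSet (mem_sumSet_of_mem ?_ haC) (sumSet_mono ?_ hT2)
      · simp
      · rw [Finset.coe_insert]; exact Set.subset_insert _ _

theorem sumSet_insert {F : Set (AddSubgroup D)} {C : AddSubgroup D} {x : D}
    (hx : x ∈ SumSet (insert C F)) : ∃ w ∈ C, ∃ σ ∈ SumSet F, x = w + σ := by
  obtain ⟨L, hL, rfl⟩ := hx
  induction L with
  | nil => exact ⟨0, zero_mem C, 0, zero_mem_sumSet F, by simp⟩
  | cons a L ih =>
    obtain ⟨w, hw, σ, hσ, hws⟩ := ih fun e he => hL e (List.mem_cons_of_mem a he)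
    obtain ⟨C', hC', haC'⟩ := hL a (List.mem_cons_self)
    rcases Set.mem_insert_iff.mp hC' with rfl | hC'F
    · exact ⟨a + w, add_mem haC' hw, σ, hσ, by rw [List.sum_cons, hws, add_assoc]⟩
    · refine ⟨w, hw, a + σ, add_mem_sumSet (mem_sumSet_of_mem hC'F haC') hσ, ?_⟩
      rw [List.sum_cons, hws, add_left_comm]

theorem list_lift {S : Set D} : ∀ (L : List D), (∀ e ∈ L, e ∈ S) →
    ∃ l : List ↥S, l.map Subtype.val = L
  | [], _ => ⟨[], rfl⟩
  | a :: L, h => by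
    obtain ⟨l, hl⟩ := list_lift L fun e he => h e (List.mem_cons_of_mem a he)
    exact ⟨⟨a, h a (List.mem_cons_self)⟩ :: l, by simp [hl]⟩

theorem finsetSum_mem_sumSet {F : Set (AddSubgroup D)} {ι : Type*} (t : Finset ι) (f : ι → D)
    (h : ∀ i ∈ t, f i ∈ SumSet F) : (∑ i ∈ t, f i) ∈ SumSet F := by
  classical
  induction t using Finset.induction_on with
  | empty => simpa using zero_mem_sumSet F
  | @insert a s hni ih =>
    rw [Finset.sum_insert hni]
    exact add_mem_sumSet (h _ (Finset.mem_insert_self _ _))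
      (ih fun i hi => h i (Finset.mem_insert_of_mem hi))


def IndFam (𝒮 : Set (AddSubgroup D)) : Prop :=
  ∀ C ∈ 𝒮, ∀ c ∈ C, c ∈ SumSet (𝒮 \ {C}) → c = 0

theorem exists_spanning_family (Pred : AddSubgroup D → Prop)
    (hext : ∀ 𝒮 : Set (AddSubgroup D), (∀ C ∈ 𝒮, Pred C ∧ C ≠ ⊥) → IndFam 𝒮 →
      SumSet 𝒮 ≠ Set.univ → ∃ C, Pred C ∧ C ≠ ⊥ ∧ ∀ w ∈ C, w ∈ SumSet 𝒮 → w = 0) :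
    ∃ 𝒮 : Set (AddSubgroup D), (∀ C ∈ 𝒮, Pred C ∧ C ≠ ⊥) ∧ IndFam 𝒮 ∧
      ∀ x : D, x ∈ SumSet 𝒮 := by
  classical
  set S : Set (Set (AddSubgroup D)) := {𝒮 | (∀ C ∈ 𝒮, Pred C ∧ C ≠ ⊥) ∧ IndFam 𝒮} with hS
  have hchain : ∀ c ⊆ S, IsChain (· ⊆ ·) c → ∃ ub ∈ S, ∀ s ∈ c, s ⊆ ub := by
    intro c hcS hchain
    refine ⟨⋃₀ c, ⟨?_, ?_⟩, fun s hs => Set.subset_sUnion_of_mem hs⟩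
    · rintro C ⟨𝒮i, h𝒮i, hC⟩
      exact (hcS h𝒮i).1 C hC
    · rintro C ⟨𝒮0, h𝒮0, hC0⟩ x hxC hxmem
      obtain ⟨L, hL, hsum⟩ := hxmem
      have habs : ∀ L' : List D, (∀ e ∈ L', ∃ C' ∈ (⋃₀ c) \ {C}, e ∈ C') →
          ∃ 𝒮i ∈ c, 𝒮0 ⊆ 𝒮i ∧ ∀ e ∈ L', ∃ C' ∈ 𝒮i \ {C}, e ∈ C' := by
        intro L'
        induction L' with
        | nil => exact fun _ => ⟨𝒮0, h𝒮0, le_refl _, by simp⟩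
        | cons a L' ih =>
          intro hal
          obtain ⟨𝒮i, h1, h2, h3⟩ := ih fun e he => hal e (List.mem_cons_of_mem a he)
          obtain ⟨C', hC', haC'⟩ := hal a (List.mem_cons_self)
          obtain ⟨⟨𝒮j, h𝒮j, hC'j⟩, hC'ne⟩ := hC'
          rcases eq_or_ne 𝒮i 𝒮j with rfl | hij
          · refine ⟨𝒮i, h1, h2, ?_⟩
            intro e he
            rcases List.mem_cons.mp he with rfl | he'
            · exact ⟨C', ⟨hC'j, hC'ne⟩, haC'⟩
            · exact h3 e he'
          · rcases hchain h1 h𝒮j hij with hsub | hsub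
            · refine ⟨𝒮j, h𝒮j, h2.trans hsub, ?_⟩
              intro e he
              rcases List.mem_cons.mp he with rfl | he'
              · exact ⟨C', ⟨hC'j, hC'ne⟩, haC'⟩
              · obtain ⟨C'', hC'', heC''⟩ := h3 e he'
                exact ⟨C'', ⟨hsub hC''.1, hC''.2⟩, heC''⟩
            · refine ⟨𝒮i, h1, h2, ?_⟩
              intro e he
              rcases List.mem_cons.mp he with rfl | he'
              · exact ⟨C', ⟨hsub hC'j, hC'ne⟩, haC'⟩
              · exact h3 e he'
      obtain ⟨𝒮i, h1, h2, h3⟩ := habs L hL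
      exact (hcS h1).2 C (h2 hC0) x hxC ⟨L, h3, hsum⟩
  obtain ⟨M, hM⟩ := zorn_subset S hchain
  have hMS : M ∈ S := hM.prop
  by_cases htop : ∀ x : D, x ∈ SumSet M
  · exact ⟨M, hMS.1, hMS.2, htop⟩
  · exfalso
    push_neg at htop
    have hne_univ : SumSet M ≠ Set.univ := fun h => by
      obtain ⟨x, hx⟩ := htop
      rw [h] at hx
      exact hx trivial
    obtain ⟨C, hP, hCne, hC0⟩ := hext M hMS.1 hMS.2 hne_univ
    have hCM : C ∉ M := by
      intro hCM
      obtain ⟨w, hw, hw0⟩ : ∃ w ∈ C, w ≠ 0 := by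
        by_contra hcc
        push_neg at hcc
        exact hCne ((AddSubgroup.eq_bot_iff_forall C).mpr hcc)
      exact hw0 (hC0 w hw (mem_sumSet_of_mem hCM hw))
    have hS' : insert C M ∈ S := by
      constructor
      · rintro C' hC'
        rcases Set.mem_insert_iff.mp hC' with rfl | hC'M
        · exact ⟨hP, hCne⟩
        · exact hMS.1 C' hC'M
      · intro C' hC' c' hc' hmem
        rcases Set.mem_insert_iff.mp hC' with rfl | hC'M
        · have hsub : insert C' M \ {C'} ⊆ M := by
            rintro C'' ⟨hC''1, hC''2⟩
            rcases Set.mem_insert_iff.mp hC''1 with rfl | h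
            · exact absurd rfl hC''2
            · exact h
          exact hC0 c' hc' (sumSet_mono hsub hmem)
        · have hCC' : C ≠ C' := fun h => hCM (h ▸ hC'M)
          have heq : insert C M \ {C'} = insert C (M \ {C'}) := by
            ext C''
            simp only [Set.mem_diff, Set.mem_insert_iff, Set.mem_singleton_iff]
            constructor
            · rintro ⟨rfl | h1, h2⟩
              · exact Or.inl rfl
              · exact Or.inr ⟨h1, h2⟩
            · rintro (rfl | ⟨h1, h2⟩)
              · exact ⟨Or.inl rfl, hCC'⟩
              · exact ⟨Or.inr h1, h2⟩
          rw [heq] at hmem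
          obtain ⟨w, hw, σ, hσ, hc'eq⟩ := sumSet_insert hmem
          have hwM : w ∈ SumSet M := by
            have h1 : c' ∈ SumSet M := mem_sumSet_of_mem hC'M hc'
            have h2 : σ ∈ SumSet M := sumSet_mono Set.diff_subset hσ
            have h3 : w = c' - σ := by rw [hc'eq]; abel
            rw [h3]
            exact sub_mem_sumSet h1 h2
          have hw0 : w = 0 := hC0 w hw hwM
          exact hMS.2 C' hC'M c' hc' (by rw [hc'eq, hw0, zero_add]; exact hσ)
    exact hCM (hM.2 hS' (Set.subset_insert C M) (Set.mem_insert C M))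

theorem goodPartition_of_family (hbig : ℵ₀ < #D) (𝒮 : Set (AddSubgroup D))
    (hne : ∀ C ∈ 𝒮, C ≠ ⊥)
    (hcnt : ∀ C ∈ 𝒮, (C : Set D).Countable)
    (hind : ∀ C ∈ 𝒮, ∀ c ∈ C, c ∈ SumSet (𝒮 \ {C}) → c = 0)
    (htop : ∀ x : D, x ∈ SumSet 𝒮) : GoodPartition D := by
  classical
  haveI : Infinite D := Cardinal.infinite_iff.mpr hbig.le
  have exwit : ∀ x : D, ∃ m : ℕ, ∃ T : Finset (AddSubgroup D),
      ↑T ⊆ 𝒮 ∧ T.card ≤ m ∧ x ∈ SumSet ↑T := by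
    intro x
    obtain ⟨T, hT1, hT2⟩ := sumSet_exists_finset (htop x)
    exact ⟨T.card, T, hT1, le_rfl, hT2⟩
  set s : D → ℕ := fun x => Nat.find (exwit x) with hs
  have swit : ∀ x : D, ∃ T : Finset (AddSubgroup D), ↑T ⊆ 𝒮 ∧ T.card ≤ s x ∧ x ∈ SumSet ↑T :=
    fun x => Nat.find_spec (exwit x)
  have sle : ∀ (x : D) (T : Finset (AddSubgroup D)), ↑T ⊆ 𝒮 → x ∈ SumSet ↑T → s x ≤ T.card :=
    fun x T h1 h2 => Nat.find_le ⟨T, h1, le_rfl, h2⟩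
  have ssub : ∀ x y : D, s (x - y) ≤ s x + s y := by
    intro x y
    obtain ⟨T1, h11, h12, h13⟩ := swit x
    obtain ⟨T2, h21, h22, h23⟩ := swit y
    have hm : x - y ∈ SumSet (↑(T1 ∪ T2) : Set (AddSubgroup D)) := by
      rw [Finset.coe_union]
      exact sub_mem_sumSet (sumSet_mono Set.subset_union_left h13)
        (sumSet_mono Set.subset_union_right h23)
    refine (sle _ _ ?_ hm).trans ?_
    · rw [Finset.coe_union]; exact Set.union_subset h11 h21
    · exact (Finset.card_union_le _ _).trans (add_le_add h12 h22)
  have h𝒮ne : 𝒮.Nonempty := by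
    obtain ⟨x, hx0⟩ := exists_ne (0 : D)
    obtain ⟨L, hL, hsum⟩ := htop x
    rcases L with _ | ⟨a, L⟩
    · exact absurd hsum (by simpa using (Ne.symm hx0))
    · obtain ⟨C, hC, -⟩ := hL a (List.mem_cons_self)
      exact ⟨C, hC⟩
  haveI : Nonempty ↥𝒮 := h𝒮ne.to_subtype
  have hDS : #D ≤ #𝒮 := by
    by_contra hcon
    rw [not_le] at hcon
    set U : Set D := ⋃ C : ↥𝒮, ((C : AddSubgroup D) : Set D) with hU
    have hUcard : #U ≤ #𝒮 * ℵ₀ := by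
      refine (Cardinal.mk_iUnion_le _).trans ?_
      refine mul_le_mul_right (ciSup_le ?_) _
      intro C
      haveI : Countable ↥((C : AddSubgroup D) : Set D) := (hcnt _ C.2).to_subtype
      exact Cardinal.mk_le_aleph0
    have hsurj : Function.Surjective (fun l : List ↥U => (l.map Subtype.val).sum) := by
      intro x
      obtain ⟨L, hL, hsum⟩ := htop x
      have hLU : ∀ e ∈ L, e ∈ U := by
        intro e he
        obtain ⟨C, hC, heC⟩ := hL e he
        exact Set.mem_iUnion.mpr ⟨⟨C, hC⟩, heC⟩
      obtain ⟨l, hl⟩ := list_lift L hLU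
      exact ⟨l, by dsimp only; rw [hl, hsum]⟩
    have h1 : #D ≤ #(List ↥U) := Cardinal.mk_le_of_surjective hsurj
    have h2 : #(List ↥U) ≤ max ℵ₀ #U := Cardinal.mk_list_le_max _
    have h3 : #U < #D := hUcard.trans_lt (Cardinal.mul_lt_of_lt hbig.le hcon hbig)
    have h4 : max ℵ₀ #U < #D := max_lt hbig h3
    exact absurd ((h1.trans h2).trans_lt h4) (lt_irrefl _)
  let uemb : ℕ ↪ D := Infinite.natEmbedding D
  set A : ℕ → Set D := fun n => ({x | s x = n} \ Set.range uemb) ∪ {uemb n} with hA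
  have hsA : ∀ n x, x ∈ A n → s x ≤ max n (s (uemb n)) := by
    intro n x hx
    rcases hx with ⟨hx1, -⟩ | hx2
    · exact le_max_of_le_left (le_of_eq hx1)
    · rw [Set.mem_singleton_iff] at hx2
      exact le_max_of_le_right (le_of_eq (by rw [hx2]))
  refine ⟨A, ?_, ?_, ?_⟩
  · apply Set.eq_univ_of_forall
    intro x
    by_cases hx : x ∈ Set.range uemb
    · obtain ⟨n, rfl⟩ := hx
      exact Set.mem_iUnion.mpr ⟨n, Or.inr rfl⟩
    · exact Set.mem_iUnion.mpr ⟨s x, Or.inl ⟨rfl, hx⟩⟩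
  · intro m n hmn
    rw [Set.disjoint_left]
    rintro x (⟨hx1, hx2⟩ | hx3) (⟨hy1, hy2⟩ | hy3)
    · exact hmn (hx1.symm.trans hy1)
    · rw [Set.mem_singleton_iff] at hy3
      exact hx2 (hy3 ▸ Set.mem_range_self n)
    · rw [Set.mem_singleton_iff] at hx3
      exact hy2 (hx3 ▸ Set.mem_range_self m)
    · rw [Set.mem_singleton_iff] at hx3 hy3
      exact hmn (uemb.injective (hx3.symm.trans hy3))
  · intro n
    set bn : ℕ := max n (s (uemb n)) with hbn
    have h0 : (0 : D) ∈ A n - A n := by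
      have hu : uemb n ∈ A n := Or.inr rfl
      have := Set.sub_mem_sub hu hu
      rwa [sub_self] at this
    apply covAdd_eq_mk h0
    intro X hX
    by_contra hcon
    rw [not_le] at hcon
    have hXne : X.Nonempty := by
      rcases Set.eq_empty_or_nonempty X with rfl | h
      · rw [Set.empty_add] at hX
        exact absurd hX Set.empty_ne_univ
      · exact h
    haveI : Nonempty ↥X := hXne.to_subtype
    choose T hT1 hT2 hT3 using swit
    set 𝒰 : Set (AddSubgroup D) := ⋃ x : ↥X, (↑(T ↑x) : Set (AddSubgroup D)) with h𝒰
    have h𝒰card : #𝒰 < #D := by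
      have h1 : #𝒰 ≤ #X * ℵ₀ := by
        refine (Cardinal.mk_iUnion_le _).trans (mul_le_mul_right (ciSup_le ?_) _)
        intro x
        haveI : Countable ↥(↑(T ↑x) : Set (AddSubgroup D)) := (T ↑x).countable_toSet.to_subtype
        exact Cardinal.mk_le_aleph0
      exact h1.trans_lt (Cardinal.mul_lt_of_lt hbig.le hcon hbig)
    have hfresh : (𝒮 \ 𝒰).Infinite := by
      by_contra hni
      rw [Set.not_infinite] at hni
      haveI := hni.to_subtype
      have h1 : #𝒮 ≤ #𝒰 + #↥(𝒮 \ 𝒰) := by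
        refine (Cardinal.mk_le_mk_of_subset (t := 𝒰 ∪ (𝒮 \ 𝒰)) ?_).trans
          (Cardinal.mk_union_le _ _)
        intro C hC
        by_cases h : C ∈ 𝒰
        exacts [Or.inl h, Or.inr ⟨hC, h⟩]
      have h2 : #↥(𝒮 \ 𝒰) < ℵ₀ := Cardinal.lt_aleph0_of_finite _
      have h3 : #𝒮 < #D := h1.trans_lt (Cardinal.add_lt_of_lt hbig.le h𝒰card (h2.trans hbig))
      exact absurd (hDS.trans_lt h3) (lt_irrefl _)
    set N : ℕ := 2 * bn with hN
    let em : ℕ ↪ ↥(𝒮 \ 𝒰) := hfresh.natEmbedding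
    set CC : Fin (N + 1) → AddSubgroup D := fun j => ((em (j : ℕ) : ↥(𝒮 \ 𝒰)) : AddSubgroup D)
      with hCC
    have hCC𝒮 : ∀ j, CC j ∈ 𝒮 := fun j => (em (j : ℕ)).2.1
    have hCC𝒰 : ∀ j, CC j ∉ 𝒰 := fun j => (em (j : ℕ)).2.2
    have hCCinj : Function.Injective CC := by
      intro i j hij
      exact Fin.val_injective (em.injective (Subtype.coe_injective hij))
    have hc : ∀ j, ∃ cc : D, cc ∈ CC j ∧ cc ≠ 0 := by
      intro j
      by_contra hcon2
      push_neg at hcon2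
      refine hne _ (hCC𝒮 j) ?_
      rw [AddSubgroup.eq_bot_iff_forall]
      intro x hx
      exact hcon2 x hx
    choose c hc1 hc2 using hc
    set gg : D := ∑ j : Fin (N + 1), c j with hgg
    have hkey : ∀ x ∈ X, ¬ (s (gg - x) ≤ N) := by
      intro x hx hsle
      obtain ⟨j, hj⟩ : ∃ j : Fin (N + 1), CC j ∉ T (gg - x) := by
        by_contra hall
        push_neg at hall
        have h1 : (Finset.univ.image CC).card = N + 1 := by
          rw [Finset.card_image_of_injective _ hCCinj, Finset.card_univ, Fintype.card_fin]
        have h2 : Finset.univ.image CC ⊆ T (gg - x) := by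
          intro Cj hCj
          rw [Finset.mem_image] at hCj
          obtain ⟨j, -, rfl⟩ := hCj
          exact hall j
        have h3 := Finset.card_le_card h2
        have h4 : (T (gg - x)).card ≤ N := (hT2 (gg - x)).trans hsle
        omega
      have hsub1 : (↑(T (gg - x)) : Set (AddSubgroup D)) ⊆ 𝒮 \ {CC j} := by
        intro C hC
        refine ⟨hT1 _ hC, ?_⟩
        rw [Set.mem_singleton_iff]
        rintro rfl
        exact hj hC
      have hsub2 : (↑(T x) : Set (AddSubgroup D)) ⊆ 𝒮 \ {CC j} := by
        intro C hC
        refine ⟨hT1 _ hC, ?_⟩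
        rw [Set.mem_singleton_iff]
        rintro rfl
        exact hCC𝒰 j (Set.mem_iUnion.mpr ⟨⟨x, hx⟩, hC⟩)
      have hsum : (∑ i ∈ Finset.univ.erase j, c i) ∈ SumSet (𝒮 \ {CC j}) := by
        refine finsetSum_mem_sumSet _ _ ?_
        intro i hi
        have hij : i ≠ j := Finset.ne_of_mem_erase hi
        refine mem_sumSet_of_mem ?_ (hc1 i)
        exact ⟨hCC𝒮 i, by rw [Set.mem_singleton_iff]; exact fun h => hij (hCCinj h)⟩
      have h5 : (∑ i ∈ Finset.univ.erase j, c i) + c j = gg :=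
        Finset.sum_erase_add _ _ (Finset.mem_univ j)
      have hgid : c j = ((gg - x) + x) - (∑ i ∈ Finset.univ.erase j, c i) := by
        rw [← h5]; abel
      have hcj : c j ∈ SumSet (𝒮 \ {CC j}) := by
        rw [hgid]
        exact sub_mem_sumSet (add_mem_sumSet (sumSet_mono hsub1 (hT3 (gg - x)))
          (sumSet_mono hsub2 (hT3 x))) hsum
      exact hc2 j (hind _ (hCC𝒮 j) _ (hc1 j) hcj)
    have hgmem : gg ∈ X + (A n - A n) := by rw [hX]; trivial
    obtain ⟨x, hx, w, hw, hxw⟩ := Set.mem_add.mp hgmem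
    obtain ⟨a, ha, b, hb, hab⟩ := Set.mem_sub.mp hw
    have hw1 : s w ≤ N := by
      rw [← hab]
      calc s (a - b) ≤ s a + s b := ssub a b
        _ ≤ bn + bn := add_le_add (hsA n a ha) (hsA n b hb)
        _ = N := by rw [hN]; ring
    have hw2 : w = gg - x := by rw [← hxw]; abel
    exact hkey x hx (by rwa [← hw2])

/-! ### symClosure : the subgroup generated by a set, with cardinality control -/

def symClosure (S : Set D) : AddSubgroup D where
  carrier := {x | ∃ L : List D, (∀ w ∈ L, w ∈ S ∨ -w ∈ S) ∧ L.sum = x}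
  zero_mem' := ⟨[], by simp, rfl⟩
  add_mem' := by
    rintro a b ⟨L, hL, rfl⟩ ⟨L', hL', rfl⟩
    refine ⟨L ++ L', ?_, by simp⟩
    intro w hw
    rcases List.mem_append.mp hw with h | h
    exacts [hL w h, hL' w h]
  neg_mem' := by
    rintro a ⟨L, hL, rfl⟩
    refine ⟨L.map Neg.neg, ?_, list_sum_neg L⟩
    intro w hw
    rw [List.mem_map] at hw
    obtain ⟨v, hv, rfl⟩ := hw
    rcases hL v hv with h | h
    · right; rwa [neg_neg]
    · left; exact h

theorem subset_symClosure (S : Set D) : S ⊆ (symClosure S : Set D) := by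
  intro x hx
  exact ⟨[x], fun w hw => by rw [List.mem_singleton] at hw; exact Or.inl (hw ▸ hx), by simp⟩

theorem mem_symClosure_iff {S : Set D} {x : D} :
    x ∈ symClosure S ↔ ∃ L : List D, (∀ w ∈ L, w ∈ S ∨ -w ∈ S) ∧ L.sum = x := Iff.rfl

theorem mk_symClosure_le (S : Set D) :
    #((symClosure S : AddSubgroup D) : Set D) ≤ max ℵ₀ (#S + #S) := by
  classical
  set S' : Set D := S ∪ (Neg.neg '' S) with hS'
  have hsub : ((symClosure S : AddSubgroup D) : Set D) ⊆
      Set.range (fun l : List ↥S' => (l.map Subtype.val).sum) := by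
    rintro x ⟨L, hL, rfl⟩
    have hLS' : ∀ w ∈ L, w ∈ S' := by
      intro w hw
      rcases hL w hw with h | h
      · exact Or.inl h
      · exact Or.inr ⟨-w, h, neg_neg w⟩
    obtain ⟨l, hl⟩ := list_lift L hLS'
    exact ⟨l, by dsimp only; rw [hl]⟩
  have h1 : #((symClosure S : AddSubgroup D) : Set D) ≤ #(List ↥S') :=
    (Cardinal.mk_le_mk_of_subset hsub).trans Cardinal.mk_range_le
  refine h1.trans ((Cardinal.mk_list_le_max _).trans ?_)
  have h2 : #S' ≤ #S + #S :=
    (Cardinal.mk_union_le _ _).trans (add_le_add le_rfl Cardinal.mk_image_le)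
  exact max_le_max le_rfl h2

theorem symClosure_countable {S : Set D} (hS : S.Countable) :
    ((symClosure S : AddSubgroup D) : Set D).Countable := by
  have h1 : #S ≤ ℵ₀ := by rw [Cardinal.mk_le_aleph0_iff]; exact hS.to_subtype
  have h2 : #((symClosure S : AddSubgroup D) : Set D) ≤ ℵ₀ := by
    refine (mk_symClosure_le S).trans ?_
    simp only [max_le_iff]
    refine ⟨le_rfl, ?_⟩
    calc #S + #S ≤ ℵ₀ + ℵ₀ := add_le_add h1 h1
      _ = ℵ₀ := Cardinal.aleph0_add_aleph0
  rw [← Set.countable_coe_iff]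
  exact Cardinal.mk_le_aleph0_iff.mp h2

/-! ### iterated division-closure -/

def iterImage (f : D → ℕ → D) (e0 : D) : ℕ → Set D
  | 0 => {e0}
  | (k + 1) => iterImage f e0 k ∪
      (fun p : D × ℕ => f p.1 p.2) '' ((iterImage f e0 k) ×ˢ (Set.univ : Set ℕ))

/-! ### divisible groups -/

theorem sumSet_subgroup_div {𝒮 : Set (AddSubgroup D)}
    (hmem : ∀ C ∈ 𝒮, ∀ y ∈ C, ∀ n : ℕ, 0 < n → ∃ z ∈ C, n • z = y) :
    ∀ (L : List D), (∀ e ∈ L, ∃ C ∈ 𝒮, e ∈ C) → ∀ n : ℕ, 0 < n →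
      ∃ z ∈ SumSet 𝒮, n • z = L.sum := by
  intro L
  induction L with
  | nil => exact fun _ n _ => ⟨0, zero_mem_sumSet 𝒮, by simp⟩
  | cons a L ih =>
    intro hL n hn
    obtain ⟨z', hz', hz'sum⟩ := ih (fun e he => hL e (List.mem_cons_of_mem a he)) n hn
    obtain ⟨C, hC, haC⟩ := hL a (List.mem_cons_self)
    obtain ⟨za, hza, hzaeq⟩ := hmem C hC a haC n hn
    refine ⟨za + z', add_mem_sumSet (mem_sumSet_of_mem hC hza) hz', ?_⟩
    rw [smul_add, hzaeq, hz'sum, List.sum_cons]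

theorem goodPartition_of_divisible (hdiv : ∀ (y : D) (n : ℕ), 0 < n → ∃ z : D, n • z = y)
    (hbig : ℵ₀ < #D) : GoodPartition D := by
  classical
  set Pred : AddSubgroup D → Prop :=
    fun C => (C : Set D).Countable ∧ ∀ y ∈ C, ∀ n : ℕ, 0 < n → ∃ z ∈ C, n • z = y with hPred
  have hext : ∀ 𝒮 : Set (AddSubgroup D), (∀ C ∈ 𝒮, Pred C ∧ C ≠ ⊥) → IndFam 𝒮 →
      SumSet 𝒮 ≠ Set.univ → ∃ C, Pred C ∧ C ≠ ⊥ ∧ ∀ w ∈ C, w ∈ SumSet 𝒮 → w = 0 := by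
    intro 𝒮 hmem hind hneu
    set Sg : AddSubgroup D :=
      { carrier := SumSet 𝒮
        zero_mem' := zero_mem_sumSet 𝒮
        add_mem' := fun hx hy => add_mem_sumSet hx hy
        neg_mem' := fun hx => neg_mem_sumSet hx } with hSg
    have hSgdiv : ∀ y ∈ SumSet 𝒮, ∀ n : ℕ, 0 < n → ∃ z ∈ SumSet 𝒮, n • z = y := by
      rintro y ⟨L, hL, rfl⟩ n hn
      exact sumSet_subgroup_div (fun C hC => (hmem C hC).1.2) L hL n hn
    have hzdiv : ∀ (y : ↥Sg) (m : ℤ), m ≠ 0 → ∃ z : ↥Sg, m • z = y := by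
      intro y m hm
      have hna : 0 < m.natAbs := Int.natAbs_pos.mpr hm
      obtain ⟨z, hz, hzeq⟩ := hSgdiv (y : D) y.2 m.natAbs hna
      rcases Int.natAbs_eq m with hmeq | hmeq
      · refine ⟨⟨z, hz⟩, ?_⟩
        apply Subtype.ext
        have h1 : ((m • (⟨z, hz⟩ : ↥Sg) : ↥Sg) : D) = m • z :=
          map_zsmul Sg.subtype m (⟨z, hz⟩ : ↥Sg)
        rw [h1, hmeq, natCast_zsmul, hzeq]
      · refine ⟨-⟨z, hz⟩, ?_⟩
        apply Subtype.ext
        have h1 : ((m • (-⟨z, hz⟩ : ↥Sg) : ↥Sg) : D) = m • (-z) :=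
          map_zsmul Sg.subtype m (-⟨z, hz⟩ : ↥Sg)
        rw [h1, smul_neg, hmeq, neg_smul, natCast_zsmul, neg_neg, hzeq]
    letI : DivisibleBy ↥Sg ℤ :=
      { div := fun a m => if h : m = 0 then 0 else Classical.choose (hzdiv a m h)
        div_zero := fun a => by simp
        div_cancel := fun {m} a hm => by
          simp only [dif_neg hm]
          exact Classical.choose_spec (hzdiv a m hm) }
    have hbaer : Module.Baer ℤ ↥Sg := Module.Baer.of_divisible ↥Sg
    obtain ⟨π, hπ⟩ := hbaer.extension_property_addMonoidHom Sg.subtype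
      Sg.subtype_injective (AddMonoidHom.id ↥Sg)
    set q : D →+ D := Sg.subtype.comp π with hq
    have hq1 : ∀ x : D, q x ∈ SumSet 𝒮 := fun x => (π x).2
    have hq2 : ∀ w ∈ SumSet 𝒮, q w = w := by
      intro w hw
      have h1 : (π.comp Sg.subtype) ⟨w, hw⟩ = AddMonoidHom.id ↥Sg ⟨w, hw⟩ :=
        DFunLike.congr_fun hπ _
      have h2 : π w = ⟨w, hw⟩ := h1
      show (π w : D) = w
      rw [h2]
    obtain ⟨x₀, hx₀⟩ := (Set.ne_univ_iff_exists_notMem _).mp hneu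
    set e0 : D := x₀ - q x₀ with he0
    have he0ne : e0 ≠ 0 := by
      intro h
      apply hx₀
      have h1 : x₀ = q x₀ := by rwa [sub_eq_zero] at h
      rw [h1]; exact hq1 x₀
    have hqe0 : q e0 = 0 := by
      rw [he0, map_sub, hq2 (q x₀) (hq1 x₀), sub_self]
    set f : D → ℕ → D := fun y m =>
      Classical.choose (hdiv y (m + 1) (Nat.succ_pos m)) -
        q (Classical.choose (hdiv y (m + 1) (Nat.succ_pos m))) with hf
    have hfspec : ∀ y : D, q y = 0 → ∀ m : ℕ, q (f y m) = 0 ∧ (m + 1) • f y m = y := by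
      intro y hy m
      have hzspec : (m + 1) • Classical.choose (hdiv y (m + 1) (Nat.succ_pos m)) = y :=
        Classical.choose_spec (hdiv y (m + 1) (Nat.succ_pos m))
      constructor
      · show q (_ - q _) = 0
        rw [map_sub, hq2 _ (hq1 _), sub_self]
      · show (m + 1) • (_ - q _) = y
        rw [smul_sub, ← map_nsmul, hzspec, hy, sub_zero]
    set Sk : ℕ → Set D := iterImage f e0 with hSkdef
    have hSkcnt : ∀ k, (Sk k).Countable := by
      intro k
      induction k with
      | zero => exact Set.countable_singleton e0
      | succ k ih =>
        exact ih.union ((ih.prod Set.countable_univ).image _)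
    have hSkE : ∀ k, ∀ y ∈ Sk k, q y = 0 := by
      intro k
      induction k with
      | zero =>
        intro y hy
        have hy' : y = e0 := by simpa [hSkdef, iterImage] using hy
        rw [hy']; exact hqe0
      | succ k ih =>
        rintro y (hy | ⟨⟨z, m⟩, ⟨hz, -⟩, rfl⟩)
        · exact ih y hy
        · exact (hfspec z (ih z hz) m).1
    have hSkcl : ∀ k, ∀ y ∈ Sk k, ∀ m : ℕ, f y m ∈ Sk (k + 1) := by
      intro k y hy m
      exact Or.inr ⟨⟨y, m⟩, ⟨hy, trivial⟩, rfl⟩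
    set TT : Set D := ⋃ k, Sk k with hTT
    have hTTcnt : TT.Countable := Set.countable_iUnion hSkcnt
    have hTTE : ∀ y ∈ TT, q y = 0 := by
      intro y hy
      obtain ⟨k, hk⟩ := Set.mem_iUnion.mp hy
      exact hSkE k y hk
    have hTTcl : ∀ y ∈ TT, ∀ m : ℕ, f y m ∈ TT := by
      intro y hy m
      obtain ⟨k, hk⟩ := Set.mem_iUnion.mp hy
      exact Set.mem_iUnion.mpr ⟨k + 1, hSkcl k y hk m⟩
    have he0TT : e0 ∈ TT := Set.mem_iUnion.mpr ⟨0, rfl⟩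
    set C : AddSubgroup D := symClosure TT with hC
    have hCE : ∀ w ∈ C, q w = 0 := by
      rintro w ⟨L, hL, rfl⟩
      have : ∀ e ∈ L, e ∈ q.ker := by
        intro e he
        rcases hL e he with h | h
        · exact AddMonoidHom.mem_ker.mpr (hTTE e h)
        · rw [AddMonoidHom.mem_ker, ← neg_neg e, map_neg, hTTE _ h, neg_zero]
      exact AddMonoidHom.mem_ker.mp (AddSubgroup.list_sum_mem q.ker this)
    refine ⟨C, ⟨symClosure_countable hTTcnt, ?_⟩, ?_, ?_⟩
    · -- div-closedness of C
      rintro y ⟨L, hL, rfl⟩ n hn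
      set pick : D → D := fun w => if w ∈ TT then f w (n - 1) else -f (-w) (n - 1) with hpick
      have hpickspec : ∀ w, (w ∈ TT ∨ -w ∈ TT) →
          ((pick w ∈ TT ∨ -pick w ∈ TT) ∧ n • pick w = w) := by
        intro w hw
        have hn1 : (n - 1) + 1 = n := Nat.succ_pred_eq_of_pos hn
        by_cases hwT : w ∈ TT
        · have h1 := hfspec w (hTTE w hwT) (n - 1)
          rw [hn1] at h1
          constructor
          · rw [hpick]; simp only [if_pos hwT]
            exact Or.inl (hTTcl w hwT (n - 1))
          · rw [hpick]; simp only [if_pos hwT]; exact h1.2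
        · have hwnT : -w ∈ TT := hw.resolve_left hwT
          have h1 := hfspec (-w) (hTTE _ hwnT) (n - 1)
          rw [hn1] at h1
          constructor
          · rw [hpick]; simp only [if_neg hwT, neg_neg]
            exact Or.inr (hTTcl _ hwnT (n - 1))
          · rw [hpick]; simp only [if_neg hwT]
            rw [smul_neg, h1.2, neg_neg]
      refine ⟨(L.map pick).sum, ⟨L.map pick, ?_, rfl⟩, ?_⟩
      · intro w hw
        rw [List.mem_map] at hw
        obtain ⟨v, hv, rfl⟩ := hw
        exact (hpickspec v (hL v hv)).1
      · -- n • sum = L.sum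
        have : ∀ L' : List D, (∀ w ∈ L', w ∈ TT ∨ -w ∈ TT) →
            n • (L'.map pick).sum = L'.sum := by
          intro L'
          induction L' with
          | nil => intro _; simp
          | cons a L' ih =>
            intro hL'
            rw [List.map_cons, List.sum_cons, List.sum_cons, smul_add,
              (hpickspec a (hL' a (List.mem_cons_self))).2,
              ih fun w hw => hL' w (List.mem_cons_of_mem a hw)]
        exact this L hL
    · -- C ≠ ⊥
      intro hbot
      apply he0ne
      have h1 : e0 ∈ C := subset_symClosure TT he0TT
      rw [hbot] at h1
      exact h1
    · -- the key independence property
      intro w hw hwS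
      have h1 : q w = 0 := hCE w hw
      have h2 : q w = w := hq2 w hwS
      rw [← h2, h1]
  obtain ⟨𝒮, h1, h2, h3⟩ := exists_spanning_family Pred hext
  exact goodPartition_of_family hbig 𝒮 (fun C hC => (h1 C hC).2)
    (fun C hC => (h1 C hC).1.1) h2 h3

theorem goodPartition_of_module (p : ℕ) [Fact p.Prime] [Module (ZMod p) D]
    (hbig : ℵ₀ < #D) : GoodPartition D := by
  classical
  set Pred : AddSubgroup D → Prop := fun C => (C : Set D).Countable with hPred
  have hext : ∀ 𝒮 : Set (AddSubgroup D), (∀ C ∈ 𝒮, Pred C ∧ C ≠ ⊥) → IndFam 𝒮 →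
      SumSet 𝒮 ≠ Set.univ → ∃ C, Pred C ∧ C ≠ ⊥ ∧ ∀ w ∈ C, w ∈ SumSet 𝒮 → w = 0 := by
    intro 𝒮 hmem hind hneu
    set Sg : AddSubgroup D :=
      { carrier := SumSet 𝒮
        zero_mem' := zero_mem_sumSet 𝒮
        add_mem' := fun hx hy => add_mem_sumSet hx hy
        neg_mem' := fun hx => neg_mem_sumSet hx } with hSg
    obtain ⟨W', hW'⟩ := Submodule.exists_isCompl (AddSubgroup.toZModSubmodule p Sg)
    set π0 : D →ₗ[ZMod p] ↥(AddSubgroup.toZModSubmodule p Sg : Submodule (ZMod p) D) :=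
      Submodule.linearProjOfIsCompl _ W' hW' with hπ0
    have hprj : ∀ w : ↥(AddSubgroup.toZModSubmodule p Sg : Submodule (ZMod p) D), π0 (w : D) = w := fun w =>
      Submodule.linearProjOfIsCompl_apply_left hW' w
    have hq1 : ∀ x : D, ((π0 x : ↥(AddSubgroup.toZModSubmodule p Sg : Submodule (ZMod p) D)) : D) ∈ SumSet 𝒮 :=
      fun x => (π0 x).2
    have hq0 : ∀ w ∈ SumSet 𝒮, ((π0 w : ↥(AddSubgroup.toZModSubmodule p Sg : Submodule (ZMod p) D)) : D) = w := by
      intro w hw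
      have hwW : w ∈ AddSubgroup.toZModSubmodule p Sg := hw
      have h1 : π0 w = ⟨w, hwW⟩ := hprj ⟨w, hwW⟩
      rw [h1]
    obtain ⟨x₀, hx₀⟩ := (Set.ne_univ_iff_exists_notMem _).mp hneu
    set e0 : D := x₀ - ((π0 x₀ : ↥(AddSubgroup.toZModSubmodule p Sg : Submodule (ZMod p) D)) : D) with he0
    have he0ne : e0 ≠ 0 := by
      intro h
      apply hx₀
      have h1 : x₀ = ((π0 x₀ : ↥(AddSubgroup.toZModSubmodule p Sg : Submodule (ZMod p) D)) : D) := by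
        rwa [sub_eq_zero] at h
      rw [h1]
      exact hq1 x₀
    have hπe0 : π0 e0 = 0 := by
      have h1 : π0 e0 = π0 x₀ - π0 ((π0 x₀ : ↥(AddSubgroup.toZModSubmodule p Sg : Submodule (ZMod p) D)) : D) :=
        map_sub π0 x₀ _
      rw [h1, hprj (π0 x₀), sub_self]
    refine ⟨AddSubgroup.zmultiples e0, ?_, ?_, ?_⟩
    · -- countable
      refine Set.Countable.mono ?_ (Set.countable_range fun n : ℤ => n • e0)
      intro x hx
      obtain ⟨n, hn⟩ := AddSubgroup.mem_zmultiples_iff.mp hx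
      exact ⟨n, hn⟩
    · -- nonzero
      intro hbot
      apply he0ne
      have h1 : e0 ∈ AddSubgroup.zmultiples e0 := AddSubgroup.mem_zmultiples e0
      rw [hbot] at h1
      exact h1
    · -- independence from the span
      intro w hw hwS
      obtain ⟨n, hn⟩ := AddSubgroup.mem_zmultiples_iff.mp hw
      have hqw : ((π0 w : ↥(AddSubgroup.toZModSubmodule p Sg : Submodule (ZMod p) D)) : D) = 0 := by
        rw [← hn, map_zsmul, hπe0, smul_zero]
        rfl
      have h2 := hq0 w hwS
      rw [hqw] at h2
      exact h2.symm
  obtain ⟨𝒮, h1, h2, h3⟩ := exists_spanning_family Pred hext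
  exact goodPartition_of_family hbig 𝒮 (fun C hC => (h1 C hC).2)
    (fun C hC => (h1 C hC).1) h2 h3

theorem goodPartition (G : Type u) [AddCommGroup G] [Infinite G] : GoodPartition G := by
  classical
  have hℵ : ℵ₀ ≤ #G := Cardinal.infinite_iff.mp inferInstance
  by_cases hsc : ∃ g : ℕ → Cardinal.{u}, (∀ n, g n < #G) ∧ #G ≤ ⨆ n, g n
  · obtain ⟨g, h1, h2⟩ := hsc
    exact goodPartition_of_smallcof g h1 h2
  · push_neg at hsc
    have hsup : ∀ g : ℕ → Cardinal.{u}, (∀ n, g n < #G) → (⨆ n, g n) < #G := hsc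
    have hbig : ℵ₀ < #G := by
      have h1 : (⨆ n : ℕ, ((n : Cardinal.{u}))) < #G := by
        apply hsup
        intro n
        exact lt_of_lt_of_le (Cardinal.nat_lt_aleph0 n) hℵ
      have hbdd : BddAbove (Set.range fun n : ℕ => ((n : Cardinal.{u}))) := by
        refine ⟨#G, ?_⟩
        rintro c ⟨n, rfl⟩
        exact (lt_of_lt_of_le (Cardinal.nat_lt_aleph0 n) hℵ).le
      have h2 : ℵ₀ ≤ ⨆ n : ℕ, ((n : Cardinal.{u})) := by
        rw [Cardinal.aleph0_le]
        intro n
        exact le_ciSup hbdd n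
      exact lt_of_le_of_lt h2 h1
    set Np : ℕ → AddSubgroup G := fun p => AddMonoidHom.range
      (AddMonoidHom.mk' (fun x : G => p • x) (fun a b => smul_add p a b)) with hNp
    have hNp_mem : ∀ (p : ℕ) (y : G), p • y ∈ Np p := by
      intro p y
      exact ⟨y, rfl⟩
    by_cases hA : ∃ p : ℕ, p.Prime ∧ #(G ⧸ Np p) = #G
    · obtain ⟨p, hp, hcard⟩ := hA
      haveI : Fact p.Prime := ⟨hp⟩
      haveI : NeZero p := ⟨hp.ne_zero⟩
      have hpz : ∀ x : G ⧸ Np p, p • x = 0 := by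
        intro x
        obtain ⟨g, rfl⟩ := QuotientAddGroup.mk'_surjective (Np p) x
        rw [← map_nsmul]
        exact (QuotientAddGroup.eq_zero_iff _).mpr (hNp_mem p g)
      letI : Module (ZMod p) (G ⧸ Np p) := AddCommGroup.zmodModule hpz
      refine goodPartition_transfer (QuotientAddGroup.mk' (Np p))
        (QuotientAddGroup.mk'_surjective _) hcard ?_
      exact goodPartition_of_module p (by rw [hcard]; exact hbig)
    · push_neg at hA
      have hlt : ∀ p : ℕ, p.Prime → #(G ⧸ Np p) < #G := by
        intro p hp
        refine lt_of_le_of_ne ?_ (hA p hp)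
        exact Cardinal.mk_le_of_surjective (QuotientAddGroup.mk'_surjective (Np p))
      set R : ℕ → Set G := fun p =>
        if p.Prime then Set.range (fun q : G ⧸ Np p => q.out) else ∅ with hR
      have hRcard : ∀ p, #(R p) < #G := by
        intro p
        by_cases hp : p.Prime
        · rw [hR]
          simp only [if_pos hp]
          exact lt_of_le_of_lt Cardinal.mk_range_le (hlt p hp)
        · rw [hR]
          simp only [if_neg hp]
          rw [Cardinal.mk_emptyCollection]
          exact lt_of_lt_of_le Cardinal.aleph0_pos hℵ
      set SS : Set G := ⋃ p : ULift.{u} ℕ, R p.down with hSS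
      have hSScard : #SS < #G := by
        have h1 : #SS ≤ #(ULift.{u} ℕ) * ⨆ p : ULift.{u} ℕ, #(R p.down) :=
          Cardinal.mk_iUnion_le _
        have h2 : #(ULift.{u} ℕ) = ℵ₀ := by simp
        have hbdd : BddAbove (Set.range fun n : ℕ => #(R n)) := by
          refine ⟨#G, ?_⟩
          rintro c ⟨n, rfl⟩
          exact (hRcard n).le
        have h3 : (⨆ p : ULift.{u} ℕ, #(R p.down)) ≤ ⨆ n : ℕ, #(R n) :=
          ciSup_le fun p => le_ciSup hbdd p.down
        have h4 : (⨆ n : ℕ, #(R n)) < #G := hsup _ hRcard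
        calc #SS ≤ ℵ₀ * ⨆ p : ULift.{u} ℕ, #(R p.down) := by rw [← h2]; exact h1
          _ ≤ ℵ₀ * ⨆ n : ℕ, #(R n) := mul_le_mul_right h3 _
          _ < #G := Cardinal.mul_lt_of_lt hℵ hbig h4
      set K0 : AddSubgroup G := symClosure SS with hK0
      have hK0card : #((K0 : AddSubgroup G) : Set G) < #G := by
        refine lt_of_le_of_lt (mk_symClosure_le SS) ?_
        exact max_lt hbig (Cardinal.add_lt_of_lt hℵ hSScard hSScard)
      have hDcard : #(G ⧸ K0) = #G := by
        have he : G ≃ (G ⧸ K0) × ↥K0 := AddSubgroup.addGroupEquivQuotientProdAddSubgroup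
        have h1 : #G = #(G ⧸ K0) * #(↥K0) := by
          rw [Cardinal.mk_congr he, Cardinal.mk_prod, Cardinal.lift_id, Cardinal.lift_id]
        have hK0card' : #(↥K0) < #G := hK0card
        have h2 : #(G ⧸ K0) ≤ #G :=
          Cardinal.mk_le_of_surjective (QuotientAddGroup.mk'_surjective K0)
        refine le_antisymm h2 ?_
        by_contra hcon
        rw [not_le] at hcon
        have h3 : #(G ⧸ K0) * #(↥K0) < #G :=
          Cardinal.mul_lt_of_lt hℵ hcon hK0card'
        rw [← h1] at h3
        exact absurd h3 (lt_irrefl _)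
      have hprime_step : ∀ p : ℕ, p.Prime → ∀ x : G, ∃ k ∈ K0, ∃ y : G, x = k + p • y := by
        intro p hp x
        set r : G := (QuotientAddGroup.mk (s := Np p) x).out with hr
        have hrR : r ∈ R p := by
          rw [hR]
          simp only [if_pos hp]
          exact ⟨QuotientAddGroup.mk (s := Np p) x, rfl⟩
        have hrK : r ∈ K0 := subset_symClosure SS (Set.mem_iUnion.mpr ⟨ULift.up p, hrR⟩)
        have hq : QuotientAddGroup.mk (s := Np p) r = QuotientAddGroup.mk (s := Np p) x := by
          rw [hr]
          exact QuotientAddGroup.out_eq' _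
        have hmem : -r + x ∈ Np p := QuotientAddGroup.eq.mp hq
        obtain ⟨y, hy⟩ := hmem
        refine ⟨r, hrK, y, ?_⟩
        have hy' : p • y = -r + x := hy
        rw [hy']
        abel
      have hdivD : ∀ (y : G ⧸ K0) (n : ℕ), 0 < n → ∃ z : G ⧸ K0, n • z = y := by
        have hsurjp : ∀ p : ℕ, p.Prime → ∀ y : G ⧸ K0, ∃ z : G ⧸ K0, p • z = y := by
          intro p hp y
          obtain ⟨x, rfl⟩ := QuotientAddGroup.mk'_surjective K0 y
          obtain ⟨k, hk, y', hy'⟩ := hprime_step p hp x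
          refine ⟨QuotientAddGroup.mk' K0 y', ?_⟩
          rw [← map_nsmul]
          rw [hy', map_add]
          have hk0 : QuotientAddGroup.mk' K0 k = 0 := (QuotientAddGroup.eq_zero_iff _).mpr hk
          rw [hk0, zero_add]
        have hstrong : ∀ n : ℕ, 0 < n → ∀ y : G ⧸ K0, ∃ z, n • z = y := by
          intro n
          induction n using Nat.strong_induction_on with
          | _ n ih =>
            intro hn y
            rcases eq_or_ne n 1 with rfl | hn1
            · exact ⟨y, one_nsmul y⟩
            · obtain ⟨p, hp, hdvd⟩ := Nat.exists_prime_and_dvd hn1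
              obtain ⟨m, rfl⟩ := hdvd
              have h2 : 2 ≤ p := hp.two_le
              have hm0 : 0 < m := by
                rcases Nat.eq_zero_or_pos m with rfl | h
                · simp at hn
                · exact h
              have hmn : m < p * m := by
                calc m = 1 * m := (one_mul m).symm
                  _ < p * m := (Nat.mul_lt_mul_right hm0).mpr (by omega)
              obtain ⟨z1, hz1⟩ := hsurjp p hp y
              obtain ⟨z, hz⟩ := ih m hmn hm0 z1
              refine ⟨z, ?_⟩
              rw [mul_comm, mul_nsmul, hz, hz1]
        exact fun y n hn => hstrong n hn y
      have hbigD : ℵ₀ < #(G ⧸ K0) := by rw [hDcard]; exact hbig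
      exact goodPartition_transfer (QuotientAddGroup.mk' K0)
        (QuotientAddGroup.mk'_surjective K0) hDcard
        (goodPartition_of_divisible hdivD hbigD)

end CovPartitionProof

/-- Every infinite Abelian group `G` of cardinality `κ` admits a partition into countably
many cells `A n` with `covAdd (A n - A n) = κ` for every `n`. -/
theorem partition_covAdd_eq_card_of_abelian {G : Type*} [AddCommGroup G] [Infinite G] :
    ∃ A : ℕ → Set G,
      (⋃ n, A n) = Set.univ ∧
      (∀ m n, m ≠ n → Disjoint (A m) (A n)) ∧
      ∀ n, covAdd (A n - A n) = #G :=
  CovPartitionProof.goodPartition G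
end

section
/- Let $G$ be an infinite group of cardinality $\varkappa$ admitting a group homomorphism onto an Abelian group of cardinality $\varkappa$. Then $G$ can be partitioned into countably many cells $G=\bigcup_{n\in\omega}A_n$ such that $cov(A_nA_n^{-1})=\varkappa$ for each $n\in\omega$. -/
open Cardinal Pointwise

universe u

set_option linter.unusedSectionVars false

namespace CovPartition


abbrev QZ : Type := ℚ ⧸ AddSubgroup.zmultiples (1 : ℚ)

abbrev MM : Type := ℚ × QZ

instance : Countable QZ := Quotient.countable

lemma qz_div (m : QZ) (n : ℤ) (hn : n ≠ 0) : ∃ y : QZ, n • y = m := by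
  obtain ⟨q, rfl⟩ := QuotientAddGroup.mk_surjective m
  refine ⟨QuotientAddGroup.mk (q / n), ?_⟩
  rw [← QuotientAddGroup.mk_zsmul]
  congr 1
  rw [zsmul_eq_mul]
  field_simp

lemma mm_div (m : MM) (n : ℤ) (hn : n ≠ 0) : ∃ y : MM, n • y = m := by
  obtain ⟨y2, hy2⟩ := qz_div m.2 n hn
  refine ⟨(m.1 / n, y2), ?_⟩
  ext
  · simp only [Prod.smul_fst]
    rw [zsmul_eq_mul]; field_simp
  · simpa using hy2

lemma exists_m0 {B : Type u} [AddCommGroup B] (c : B) :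
    ∃ m0 : MM, ∀ k : ℤ, k • m0 = 0 ↔ k • c = 0 := by
  have hc : ∀ k : ℤ, k • c = 0 ↔ (addOrderOf c : ℤ) ∣ k :=
    fun k => (addOrderOf_dvd_iff_zsmul_eq_zero).symm
  rcases Nat.eq_zero_or_pos (addOrderOf c) with h0 | hpos
  · refine ⟨(1, 0), fun k => ?_⟩
    rw [hc, h0]
    simp only [Prod.smul_mk, smul_zero, Prod.mk_eq_zero, and_true, Int.natCast_zero,
      Int.zero_dvd]
    rw [zsmul_eq_mul, mul_one, Int.cast_eq_zero]
  · set o : ℕ := addOrderOf c with ho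
    refine ⟨(0, QuotientAddGroup.mk (1 / (o : ℚ))), fun k => ?_⟩
    rw [hc]
    simp only [Prod.smul_mk, smul_zero, Prod.mk_eq_zero, true_and]
    rw [← QuotientAddGroup.mk_zsmul, QuotientAddGroup.eq_zero_iff,
      AddSubgroup.mem_zmultiples_iff]
    constructor
    · rintro ⟨t, ht⟩
      rw [zsmul_eq_mul, zsmul_eq_mul, mul_one] at ht
      have : (t : ℚ) * o = k := by
        have hoQ : (o : ℚ) ≠ 0 := by positivity
        field_simp at ht
        linarith [ht]
      have h2 : ((o * t : ℤ) : ℚ) = (k : ℚ) := by push_cast; linarith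
      exact ⟨t, by exact_mod_cast h2.symm⟩
    · rintro ⟨t, rfl⟩
      refine ⟨t, ?_⟩
      rw [zsmul_eq_mul, zsmul_eq_mul, mul_one]
      have hoQ : (o : ℚ) ≠ 0 := by positivity
      push_cast
      field_simp

variable {B : Type u} [AddCommGroup B]

abbrev Minf (B : Type u) := B →₀ MM

lemma minf_div (m : Minf B) (n : ℤ) (hn : n ≠ 0) : ∃ y : Minf B, n • y = m := by
  have h : ∀ i : B, ∃ y : MM, n • y = m i := fun i => mm_div (m i) n hn
  choose d hd using h
  refine ⟨m.support.sum (fun i => Finsupp.single i (d i)), ?_⟩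
  rw [Finset.smul_sum]
  simp_rw [Finsupp.smul_single, hd]
  exact Finsupp.sum_single m

noncomputable def dom (Γ : AddSubgroup (B × Minf B)) : AddSubgroup B :=
  Γ.map (AddMonoidHom.fst B (Minf B))

lemma mem_dom {Γ : AddSubgroup (B × Minf B)} {b : B} : b ∈ dom Γ ↔ ∃ m, (b, m) ∈ Γ := by
  constructor
  · rintro ⟨⟨b', m⟩, hm, rfl⟩
    exact ⟨m, hm⟩
  · rintro ⟨m, hm⟩
    exact ⟨(b, m), hm, rfl⟩

lemma dom_mono {Γ Γ' : AddSubgroup (B × Minf B)} (h : Γ ≤ Γ') : dom Γ ≤ dom Γ' :=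
  AddSubgroup.map_mono h

def Good (Γ : AddSubgroup (B × Minf B)) : Prop := ∀ m : Minf B, (0, m) ∈ Γ → m = 0
def Inj (Γ : AddSubgroup (B × Minf B)) : Prop := ∀ b : B, (b, (0 : Minf B)) ∈ Γ → b = 0
def SuppC (Γ : AddSubgroup (B × Minf B)) : Prop :=
  ∀ p ∈ Γ, ∀ i ∈ (Prod.snd p).support, i ∈ dom Γ

lemma exists_emb (B : Type u) [AddCommGroup B] :
    ∃ φ : B →+ Minf B, ∀ b, φ b = 0 → b = 0 := by
  classical
  -- Stage 1 : maximal injective partial hom with support condition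
  set S1 : Set (AddSubgroup (B × Minf B)) := {Γ | Good Γ ∧ Inj Γ ∧ SuppC Γ} with hS1
  have hbot : (⊥ : AddSubgroup (B × Minf B)) ∈ S1 := by
    refine ⟨?_, ?_, ?_⟩
    · intro m hm
      have := AddSubgroup.mem_bot.mp hm
      simpa [Prod.ext_iff] using this
    · intro b hb
      have := AddSubgroup.mem_bot.mp hb
      simpa [Prod.ext_iff] using this
    · intro p hp i hi
      have := AddSubgroup.mem_bot.mp hp
      subst this
      simp at hi
  obtain ⟨Γ1, -, hΓ1S, hΓ1max⟩ :
      ∃ m, ⊥ ≤ m ∧ Maximal (· ∈ S1) m := by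
    apply zorn_le_nonempty₀ S1 ?_ ⊥ hbot
    intro c hcS hc y hy
    refine ⟨sSup c, ?_, fun z hz => le_sSup hz⟩
    have hne : c.Nonempty := ⟨y, hy⟩
    have hdir := hc.directedOn
    have hmem : ∀ p : B × Minf B, p ∈ sSup c ↔ ∃ Γ ∈ c, p ∈ Γ := fun p =>
      AddSubgroup.mem_sSup_of_directedOn hne hdir
    refine ⟨?_, ?_, ?_⟩
    · intro m hm
      obtain ⟨Γ, hΓ, hmΓ⟩ := (hmem _).mp hm
      exact (hcS hΓ).1 m hmΓ
    · intro b hb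
      obtain ⟨Γ, hΓ, hbΓ⟩ := (hmem _).mp hb
      exact (hcS hΓ).2.1 b hbΓ
    · intro p hp i hi
      obtain ⟨Γ, hΓ, hpΓ⟩ := (hmem _).mp hp
      exact dom_mono (le_sSup hΓ) ((hcS hΓ).2.2 p hpΓ i hi)
  obtain ⟨hG1, hI1, hSC1⟩ := hΓ1S
  -- essentiality of dom Γ1
  have hess : ∀ c : B, c ≠ 0 → ∃ k : ℤ, k • c ∈ dom Γ1 ∧ k • c ≠ 0 := by
    intro c hc0
    by_contra hcon
    push_neg at hcon
    have hcnot : c ∉ dom Γ1 := fun h => hc0 (by simpa using hcon 1 (by simpa using h))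
    obtain ⟨m0, hm0⟩ := exists_m0 c
    set q : B × Minf B := (c, Finsupp.single c m0) with hq
    set Γ' := Γ1 ⊔ AddSubgroup.zmultiples q with hΓ'
    have hqΓ' : q ∈ Γ' := by
      have h : AddSubgroup.zmultiples q ≤ Γ' := le_sup_right
      exact h (AddSubgroup.mem_zmultiples q)
    have hmem' : ∀ p : B × Minf B, p ∈ Γ' →
        ∃ γ ∈ Γ1, ∃ k : ℤ, γ + k • q = p := by
      intro p hp
      rw [hΓ', AddSubgroup.mem_sup] at hp
      obtain ⟨γ, hγ, z, hz, hzp⟩ := hp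
      obtain ⟨k, rfl⟩ := AddSubgroup.mem_zmultiples_iff.mp hz
      exact ⟨γ, hγ, k, hzp⟩
    have hq0 : ∀ k : ℤ, k • c = 0 → k • q = 0 := by
      intro k hkc
      have hkm0 : k • m0 = 0 := (hm0 k).mpr hkc
      have : k • q = (k • c, Finsupp.single c (k • m0)) := by
        rw [hq, Prod.smul_mk, Finsupp.smul_single]
      rw [this, hkc, hkm0, Finsupp.single_zero]
      rfl
    have hkey : ∀ (γ : B × Minf B) (k : ℤ), γ ∈ Γ1 → γ.1 + k • c = 0 →
        k • q = 0 := by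
      intro γ k hγ h1
      have h1' : k • c ∈ dom Γ1 := by
        have h2 : k • c = -γ.1 := by linear_combination (norm := abel) h1
        rw [h2]
        exact neg_mem (mem_dom.mpr ⟨γ.2, by simpa using hγ⟩)
      exact hq0 k (hcon k h1')
    have hΓ'S : Γ' ∈ S1 := by
      refine ⟨?_, ?_, ?_⟩
      · intro m hm
        obtain ⟨γ, hγ, k, hsum⟩ := hmem' _ hm
        have h1 : γ.1 + k • c = 0 := by
          have := congrArg Prod.fst hsum
          simpa [hq] using this
        have hkq := hkey γ k hγ h1
        rw [hkq, add_zero] at hsum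
        subst hsum
        exact hG1 _ (by simpa using hγ)
      · intro b hb
        obtain ⟨γ, hγ, k, hsum⟩ := hmem' _ hb
        have h2 : γ.2 + Finsupp.single c (k • m0) = 0 := by
          have := congrArg Prod.snd hsum
          simpa [hq, Finsupp.smul_single] using this
        have hγ2c : γ.2 c = 0 := by
          by_contra hne
          exact hcnot (hSC1 γ hγ c (Finsupp.mem_support_iff.mpr hne))
        have hkm0 : k • m0 = 0 := by
          have h3 := congrArg (fun (f : Minf B) => f c) h2
          simp only [Finsupp.add_apply, Finsupp.single_eq_same, Finsupp.coe_zero,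
            Pi.zero_apply, hγ2c, zero_add] at h3
          exact h3
        have hkq : k • q = 0 := hq0 k ((hm0 k).mp hkm0)
        rw [hkq, add_zero] at hsum
        exact hI1 b (hsum ▸ hγ)
      · intro p hp i hi
        obtain ⟨γ, hγ, k, hsum⟩ := hmem' _ hp
        have h2 : p.2 = γ.2 + Finsupp.single c (k • m0) := by
          have := congrArg Prod.snd hsum
          simpa [hq, Finsupp.smul_single] using this.symm
        rw [h2] at hi
        have := Finsupp.support_add hi
        rw [Finset.mem_union] at this
        rcases this with h | h
        · exact dom_mono le_sup_left (hSC1 γ hγ i h)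
        · have : i = c := Finset.mem_singleton.mp (Finsupp.support_single_subset h)
          subst this
          exact mem_dom.mpr ⟨_, hqΓ'⟩
    have : q ∈ Γ1 := hΓ1max hΓ'S le_sup_left hqΓ'
    exact hcnot (mem_dom.mpr ⟨_, this⟩)
  -- Stage 2 : extend to a total hom using divisibility
  set S2 : Set (AddSubgroup (B × Minf B)) := {Γ | Good Γ ∧ Γ1 ≤ Γ} with hS2
  obtain ⟨Γ2, -, hΓ2S, hΓ2max⟩ :
      ∃ m, Γ1 ≤ m ∧ Maximal (· ∈ S2) m := by
    apply zorn_le_nonempty₀ S2 ?_ Γ1 ⟨hG1, le_refl Γ1⟩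
    intro c hcS hc y hy
    refine ⟨sSup c, ?_, fun z hz => le_sSup hz⟩
    have hne : c.Nonempty := ⟨y, hy⟩
    have hmem : ∀ p : B × Minf B, p ∈ sSup c ↔ ∃ Γ ∈ c, p ∈ Γ := fun p =>
      AddSubgroup.mem_sSup_of_directedOn hne hc.directedOn
    constructor
    · intro m hm
      obtain ⟨Γ, hΓ, hmΓ⟩ := (hmem _).mp hm
      exact (hcS hΓ).1 m hmΓ
    · exact le_trans (hcS hy).2 (le_sSup hy)
  obtain ⟨hG2, hle12⟩ := hΓ2S
  -- the domain of Γ2 is everything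
  have hdomtop : ∀ b : B, b ∈ dom Γ2 := by
    intro b
    by_contra hb
    -- the set of integers k with k • b ∈ dom Γ2 is a subgroup of ℤ
    set K : AddSubgroup ℤ :=
      { carrier := {k : ℤ | k • b ∈ dom Γ2}
        zero_mem' := by simp only [Set.mem_setOf_eq, zero_zsmul]; exact zero_mem _
        add_mem' := by
          intro x y hx hy
          simp only [Set.mem_setOf_eq, add_zsmul] at *
          exact add_mem hx hy
        neg_mem' := by
          intro x hx
          simp only [Set.mem_setOf_eq, neg_zsmul] at *
          exact neg_mem hx } with hK
    obtain ⟨n, hn⟩ := Int.subgroup_cyclic K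
    have hmemK : ∀ k : ℤ, k • b ∈ dom Γ2 ↔ n ∣ k := by
      intro k
      have : k ∈ K ↔ k • b ∈ dom Γ2 := Iff.rfl
      rw [← this, hn, ← AddSubgroup.zmultiples_eq_closure, Int.mem_zmultiples_iff]
    -- choose the second component for b
    have hpair : ∃ mb : Minf B, ∀ k : ℤ, k • b ∈ dom Γ2 → k • (b, mb) ∈ Γ2 := by
      rcases eq_or_ne n 0 with hn0 | hn0
      · refine ⟨0, fun k hk => ?_⟩
        have : n ∣ k := (hmemK k).mp hk
        rw [hn0, Int.zero_dvd] at this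
        rw [this, zero_zsmul]
        exact zero_mem _
      · have hnb : n • b ∈ dom Γ2 := (hmemK n).mpr dvd_rfl
        obtain ⟨μ, hμ⟩ := mem_dom.mp hnb
        obtain ⟨mb, hmb⟩ := minf_div μ n hn0
        refine ⟨mb, fun k hk => ?_⟩
        obtain ⟨t, rfl⟩ := (hmemK k).mp hk
        have : (n * t) • (b, mb) = t • ((n • b, μ) : B × Minf B) := by
          rw [mul_comm, mul_zsmul]
          congr 1
          rw [Prod.smul_mk, hmb]
        rw [this]
        exact AddSubgroup.zsmul_mem _ hμ t
    obtain ⟨mb, hmb⟩ := hpair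
    set q : B × Minf B := (b, mb) with hq
    set Γ' := Γ2 ⊔ AddSubgroup.zmultiples q with hΓ'
    have hqΓ' : q ∈ Γ' := by
      have h : AddSubgroup.zmultiples q ≤ Γ' := le_sup_right
      exact h (AddSubgroup.mem_zmultiples q)
    have hΓ'S : Γ' ∈ S2 := by
      constructor
      · intro m hm
        rw [hΓ', AddSubgroup.mem_sup] at hm
        obtain ⟨γ, hγ, z, hz, hzp⟩ := hm
        obtain ⟨k, rfl⟩ := AddSubgroup.mem_zmultiples_iff.mp hz
        have h1 : γ.1 + k • b = 0 := by
          have := congrArg Prod.fst hzp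
          simpa [hq] using this
        have hkb : k • b ∈ dom Γ2 := by
          have h2 : k • b = -γ.1 := by linear_combination (norm := abel) h1
          rw [h2]
          exact neg_mem (mem_dom.mpr ⟨γ.2, by simpa using hγ⟩)
        have : γ + k • q ∈ Γ2 := add_mem hγ (hmb k hkb)
        rw [hzp] at this
        exact hG2 m this
      · exact le_trans hle12 le_sup_left
    have : q ∈ Γ2 := hΓ2max hΓ'S le_sup_left hqΓ'
    exact hb (mem_dom.mpr ⟨mb, this⟩)
  -- build the homomorphism
  have huniq : ∀ (b : B) (m m' : Minf B), (b, m) ∈ Γ2 → (b, m') ∈ Γ2 → m = m' := by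
    intro b m m' h h'
    have : ((0 : B), m - m') ∈ Γ2 := by
      have := sub_mem h h'
      simpa using this
    exact sub_eq_zero.mp (hG2 _ this)
  have hex : ∀ b : B, ∃ m, (b, m) ∈ Γ2 := fun b => mem_dom.mp (hdomtop b)
  choose g hg using hex
  have hadd : ∀ a b : B, g (a + b) = g a + g b := by
    intro a b
    have h1 : (a + b, g a + g b) ∈ Γ2 := by
      have := add_mem (hg a) (hg b)
      simpa using this
    exact huniq _ _ _ (hg (a + b)) h1
  refine ⟨AddMonoidHom.mk' g hadd, ?_⟩
  intro b hb0
  have hgb : g b = 0 := hb0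
  by_contra hbne
  obtain ⟨k, hkdom, hkne⟩ := hess b hbne
  have h1 : ((k • b : B), (0 : Minf B)) ∈ Γ2 := by
    have := AddSubgroup.zsmul_mem Γ2 (hg b) k
    rw [Prod.smul_mk, hgb, smul_zero] at this
    exact this
  obtain ⟨μ, hμ⟩ := mem_dom.mp hkdom
  have hμ2 : μ = 0 := huniq _ _ _ (hle12 hμ) h1
  exact hkne (hI1 _ (by rw [← hμ2]; exact hμ))


lemma mk_finsupp_le (ι : Type u) : #(ι →₀ MM) ≤ max ℵ₀ #ι := by
  classical
  have h1 : #(ι →₀ MM) ≤ #(Finset (ι × MM)) :=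
    Cardinal.mk_le_of_injective (Finsupp.graph_injective ι MM)
  rcases finite_or_infinite ι with hfin | hinf
  · have : Countable (Finset (ι × MM)) := inferInstance
    exact le_max_of_le_left (h1.trans Cardinal.mk_le_aleph0)
  · have h2 : #(Finset (ι × MM)) = #(ι × MM) := Cardinal.mk_finset_of_infinite _
    obtain ⟨emb⟩ := nonempty_embedding_nat MM
    have h3 : #(ι × MM) ≤ #(ι × ULift.{u} ℕ) :=
      Cardinal.mk_le_of_injective (f := fun p => (p.1, (⟨emb p.2⟩ : ULift.{u} ℕ)))
        (by intro p q hpq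
            have h1 := congrArg Prod.fst hpq
            have h2 := congrArg (fun r : ι × ULift.{u} ℕ => r.2.down) hpq
            simp only at h1 h2
            exact Prod.ext h1 (emb.injective h2))
    have h4 : #(ι × ULift.{u} ℕ) = #ι * ℵ₀ := by
      rw [Cardinal.mk_prod, Cardinal.lift_id, Cardinal.mk_uLift, Cardinal.mk_nat,
        Cardinal.lift_aleph0, Cardinal.lift_id]
    have h5 : #ι * ℵ₀ ≤ max ℵ₀ #ι := by
      rcases le_total #ι ℵ₀ with h | h
      · calc #ι * ℵ₀ ≤ ℵ₀ * ℵ₀ := mul_le_mul_left h _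
          _ = ℵ₀ := Cardinal.aleph0_mul_aleph0
          _ ≤ _ := le_max_left _ _
      · calc #ι * ℵ₀ ≤ #ι * #ι := mul_le_mul_right h _
          _ = #ι := Cardinal.mul_eq_self (by exact_mod_cast h)
          _ ≤ _ := le_max_right _ _
    exact h1.trans (h2 ▸ (h3.trans (h4 ▸ h5)))

lemma exists_nonzero_vanishing (hκ : ℵ₀ < #B) (φ : B →+ Minf B)
    (hφ : ∀ b, φ b = 0 → b = 0) (Λ : Set B) (hΛ : #Λ < #B) :
    ∃ b : B, b ≠ 0 ∧ ∀ i ∈ Λ, φ b i = 0 := by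
  classical
  by_contra hcon
  push_neg at hcon
  set ρ : B →+ (↥Λ →₀ MM) :=
    (Finsupp.subtypeDomainAddMonoidHom (p := fun i => i ∈ Λ)).comp φ with hρ
  have hρinj : Function.Injective ρ := by
    intro x y hxy
    by_contra hne
    have hsub : x - y ≠ 0 := sub_ne_zero.mpr hne
    obtain ⟨i, hiΛ, hi0⟩ := hcon (x - y) hsub
    have : ρ (x - y) = 0 := by rw [map_sub, hxy, sub_self]
    have h2 : φ (x - y) i = 0 := by
      have := congrArg (fun f : ↥Λ →₀ MM => f ⟨i, hiΛ⟩) this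
      simpa [hρ, Finsupp.subtypeDomain_apply,
        show ∀ z : Minf B, Finsupp.subtypeDomainAddMonoidHom (p := fun i => i ∈ Λ) z ⟨i, hiΛ⟩ = z i
          from fun z => rfl] using this
    exact hi0 h2
  have : #B ≤ #(↥Λ →₀ MM) := Cardinal.mk_le_of_injective hρinj
  have hlt : #(↥Λ →₀ MM) < #B := lt_of_le_of_lt (mk_finsupp_le _) (max_lt hκ hΛ)
  exact absurd this (not_le.mpr hlt)

lemma exists_big_support (hκ : ℵ₀ < #B) (φ : B →+ Minf B)
    (hφ : ∀ b, φ b = 0 → b = 0) (Λ : Set B) (hΛ : #Λ < #B) (m : ℕ) :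
    ∃ b : B, m ≤ (φ b).support.card ∧ ∀ i ∈ (φ b).support, (i : B) ∉ Λ := by
  classical
  induction m with
  | zero => exact ⟨0, by simp, by simp [map_zero]⟩
  | succ m ih =>
    obtain ⟨b, hb1, hb2⟩ := ih
    have hΛ' : #(Λ ∪ ↑(φ b).support : Set B) < #B := by
      refine lt_of_le_of_lt (Cardinal.mk_union_le _ _) ?_
      have h1 : #(↑(φ b).support : Set B) ≤ ℵ₀ := Cardinal.mk_le_aleph0
      exact Cardinal.add_lt_of_lt hκ.le hΛ (h1.trans_lt hκ)
    obtain ⟨b', hb'0, hb'v⟩ := exists_nonzero_vanishing hκ φ hφ _ hΛ'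
    have hdis : Disjoint (φ b).support (φ b').support := by
      rw [Finset.disjoint_left]
      intro i hib hib'
      exact Finsupp.mem_support_iff.mp hib'
        (hb'v i (Set.mem_union_right _ (by simpa using hib)))
    have hsupp : (φ (b + b')).support = (φ b).support ∪ (φ b').support := by
      rw [map_add]; exact Finsupp.support_add_eq hdis
    refine ⟨b + b', ?_, ?_⟩
    · rw [hsupp, Finset.card_union_of_disjoint hdis]
      have hb'supp : (φ b').support.Nonempty := by
        rw [Finsupp.support_nonempty_iff]
        exact fun h0 => hb'0 (hφ _ h0)
      have : 1 ≤ (φ b').support.card := Finset.card_pos.mpr hb'supp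
      omega
    · intro i hi
      rw [hsupp, Finset.mem_union] at hi
      rcases hi with h | h
      · exact hb2 i h
      · intro hiΛ
        exact Finsupp.mem_support_iff.mp h (hb'v i (Set.mem_union_left _ hiΛ))

lemma core (B : Type u) [AddCommGroup B] (hκ : ℵ₀ < #B) :
    ∃ A : ℕ → Set B, (⋃ k, A k) = Set.univ ∧
      (∀ m k, m ≠ k → Disjoint (A m) (A k)) ∧
      ∀ k, (A k).Nonempty ∧ ∀ X : Set B, X + (A k - A k) = Set.univ → #B ≤ #X := by
  classical
  obtain ⟨φ, hφ⟩ := exists_emb B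
  set nn : B → ℕ := fun b => (φ b).support.card with hnn
  have hempty : #(∅ : Set B) < #B := by
    simpa using (aleph0_pos.trans hκ)
  have hrec : ∀ v : ℕ, ∃ b : B, v + 1 ≤ nn b := by
    intro v
    obtain ⟨b, hb, -⟩ := exists_big_support hκ φ hφ ∅ hempty (v + 1)
    exact ⟨b, hb⟩
  choose big hbig using hrec
  set w : ℕ → B := fun k => Nat.rec (big 0) (fun _ bprev => big (nn bprev)) k with hw
  set u : ℕ → ℕ := fun k => nn (w k) with hu
  have hu_succ : ∀ k, u k < u (k + 1) := by
    intro k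
    have h1 : w (k + 1) = big (nn (w k)) := rfl
    have := hbig (nn (w k))
    simpa [hu, h1] using this
  have hu_mono : StrictMono u := strictMono_nat_of_lt_succ hu_succ
  have hfind : ∀ b : B, ∃ k, nn b ≤ u k := by
    intro b
    exact ⟨nn b, (hu_mono.le_apply)⟩
  set A : ℕ → Set B := fun k => {b | Nat.find (hfind b) = k} with hA
  have hbound : ∀ k, ∀ b ∈ A k, nn b ≤ u k := by
    intro k b hb
    have := Nat.find_spec (hfind b)
    rwa [hb] at this
  refine ⟨A, ?_, ?_, ?_⟩
  · ext b
    simp only [Set.mem_iUnion, Set.mem_univ, iff_true]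
    exact ⟨Nat.find (hfind b), rfl⟩
  · intro m k hmk
    rw [Set.disjoint_left]
    intro b hbm hbk
    exact hmk (hbm.symm.trans hbk)
  · intro k
    constructor
    · refine ⟨w k, ?_⟩
      show Nat.find (hfind (w k)) = k
      rw [Nat.find_eq_iff]
      constructor
      · exact le_refl _
      · intro j hj
        simp only [not_le]
        exact hu_mono hj
    · intro X hX
      by_contra hcon
      push_neg at hcon
      set Λ : Set B := ⋃ x ∈ X, (↑(φ x).support : Set B) with hΛdef
      have hΛ : #Λ < #B := by
        have h1 : #Λ ≤ #X * ℵ₀ := by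
          rw [hΛdef, Set.biUnion_eq_iUnion]
          refine (Cardinal.mk_iUnion_le _).trans ?_
          refine mul_le_mul_right (ciSup_le' ?_) _
          intro x
          exact Cardinal.mk_le_aleph0
        exact h1.trans_lt (Cardinal.mul_lt_of_lt hκ.le hcon hκ)
      obtain ⟨bs, hbs1, hbs2⟩ := exists_big_support hκ φ hφ Λ hΛ (2 * u k + 1)
      have hbsuniv : bs ∈ X + (A k - A k) := hX ▸ Set.mem_univ bs
      rw [Set.mem_add] at hbsuniv
      obtain ⟨x, hx, s, hs, hxs⟩ := hbsuniv
      rw [Set.mem_sub] at hs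
      obtain ⟨c, hc, d, hd, hcd⟩ := hs
      -- φ s = φ bs - φ x and the support of φ bs is disjoint from supp φ x
      have hsub : (φ bs).support ⊆ (φ s).support := by
        intro i hi
        have hiΛ : (i : B) ∉ Λ := hbs2 i hi
        have hxi : φ x i = 0 := by
          by_contra hne
          exact hiΛ (Set.mem_biUnion hx (by simpa using Finsupp.mem_support_iff.mpr hne))
        have hφs : φ s = φ bs - φ x := by
          have : s = bs - x := by
            rw [← hxs]; abel
          rw [this, map_sub]
        rw [Finsupp.mem_support_iff, hφs, Finsupp.sub_apply, hxi, sub_zero]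
        exact Finsupp.mem_support_iff.mp hi
      have hcard1 : 2 * u k + 1 ≤ (φ s).support.card :=
        le_trans hbs1 (Finset.card_le_card hsub)
      have hcard2 : (φ s).support.card ≤ 2 * u k := by
        have hφs2 : φ s = φ c - φ d := by rw [← hcd, map_sub]
        have h1 : (φ s).support ⊆ (φ c).support ∪ (φ d).support := by
          rw [hφs2]; exact Finsupp.support_sub
        refine (Finset.card_le_card h1).trans ?_
        refine (Finset.card_union_le _ _).trans ?_
        have hc' := hbound k c hc
        have hd' := hbound k d hd
        have hcc : (φ c).support.card = nn c := rfl
        have hdd : (φ d).support.card = nn d := rfl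
        omega
      omega


lemma cov_eq_mk {G : Type v} [Group G] (S : Set G) (h1 : (1 : G) ∈ S)
    (hl : ∀ X : Set G, X * S = Set.univ → #G ≤ #X) : cov S = #G := by
  have hmem : #G ∈ {c : Cardinal | ∃ X : Set G, #X = c ∧ X * S = Set.univ} :=
    ⟨Set.univ, Cardinal.mk_univ, Set.univ_mul ⟨1, h1⟩⟩
  refine le_antisymm (csInf_le' hmem) (le_csInf ⟨_, hmem⟩ ?_)
  rintro c ⟨X, rfl, hX⟩
  exact hl X hX

end CovPartition

open CovPartition in
/-- If an infinite group `G` of cardinality `κ` admits a surjective homomorphism onto an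
Abelian group of cardinality `κ`, then `G` admits a partition into countably many cells
`A n` with `cov (A n * (A n)⁻¹) = κ` for every `n`. -/
theorem partition_cov_eq_card_of_abelian_image {G : Type u} [Group G] [Infinite G]
    {B : Type u} [CommGroup B] (f : G →* B) (hf : Function.Surjective f)
    (hB : #B = #G) :
    ∃ A : ℕ → Set G,
      (⋃ n, A n) = Set.univ ∧
      (∀ m n, m ≠ n → Disjoint (A m) (A n)) ∧
      ∀ n, cov (A n * (A n)⁻¹) = #G := by
  classical
  rcases eq_or_lt_of_le (Cardinal.aleph0_le_mk G) with heq | hlt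
  · -- countable case
    have hcnt : Countable G := by
      rw [← Cardinal.mk_le_aleph0_iff]
      exact le_of_eq heq.symm
    obtain ⟨e⟩ : Nonempty (G ≃ ℕ) := nonempty_equiv_of_countable
    refine ⟨fun k => {e.symm k}, ?_, ?_, ?_⟩
    · ext g
      simp only [Set.mem_iUnion, Set.mem_singleton_iff, Set.mem_univ, iff_true]
      exact ⟨e g, by simp⟩
    · intro m n hmn
      rw [Set.disjoint_left]
      intro g hgm hgn
      rw [Set.mem_singleton_iff] at hgm hgn
      exact hmn (e.symm.injective (hgm.symm.trans hgn))
    · intro k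
      have hS : ({e.symm k} : Set G) * ({e.symm k} : Set G)⁻¹ = {1} := by
        rw [Set.inv_singleton, Set.singleton_mul_singleton, mul_inv_cancel]
      rw [hS]
      refine cov_eq_mk _ rfl ?_
      intro X hX
      have h1 : X * ({1} : Set G) = X := by
        have : ({1} : Set G) = (1 : Set G) := rfl
        rw [this, mul_one]
      rw [h1] at hX
      rw [hX]
      exact le_of_eq Cardinal.mk_univ.symm
  · -- uncountable case
    have hκB : ℵ₀ < #(Additive B) := by
      have : #(Additive B) = #G := (Cardinal.mk_congr Additive.ofMul).symm.trans hB
      rwa [this]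
    obtain ⟨C, hCu, hCd, hCk⟩ := core (Additive B) hκB
    set A : ℕ → Set G := fun k => {g | Additive.ofMul (f g) ∈ C k} with hA
    refine ⟨A, ?_, ?_, ?_⟩
    · ext g
      simp only [Set.mem_iUnion, Set.mem_univ, iff_true, hA, Set.mem_setOf_eq]
      have : Additive.ofMul (f g) ∈ ⋃ k, C k := hCu ▸ Set.mem_univ _
      simpa using this
    · intro m n hmn
      rw [Set.disjoint_left]
      intro g hgm hgn
      exact Set.disjoint_left.mp (hCd m n hmn) hgm hgn
    · intro k
      obtain ⟨hCne, hCcov⟩ := hCk k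
      -- 1 ∈ A k * (A k)⁻¹
      obtain ⟨β, hβ⟩ := hCne
      obtain ⟨g, hg⟩ := hf (Additive.toMul β)
      have hgA : g ∈ A k := by
        show Additive.ofMul (f g) ∈ C k
        rw [hg]
        simpa using hβ
      have h1 : (1 : G) ∈ A k * (A k)⁻¹ := by
        rw [Set.mem_mul]
        exact ⟨g, hgA, g⁻¹, by rwa [Set.mem_inv, inv_inv], mul_inv_cancel g⟩
      refine cov_eq_mk _ h1 ?_
      intro X hX
      set Y : Set (Additive B) := (fun g => Additive.ofMul (f g)) '' X with hY
      have hYuniv : Y + (C k - C k) = Set.univ := by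
        ext β
        simp only [Set.mem_univ, iff_true]
        obtain ⟨g, hg⟩ := hf (Additive.toMul β)
        have hgX : g ∈ X * (A k * (A k)⁻¹) := hX ▸ Set.mem_univ g
        rw [Set.mem_mul] at hgX
        obtain ⟨x, hx, s, hs, hxs⟩ := hgX
        rw [Set.mem_mul] at hs
        obtain ⟨a, ha, a', ha', haa'⟩ := hs
        rw [Set.mem_inv] at ha'
        rw [Set.mem_add]
        refine ⟨Additive.ofMul (f x), Set.mem_image_of_mem _ hx,
          Additive.ofMul (f a) - Additive.ofMul (f a'⁻¹), ?_, ?_⟩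
        · rw [Set.mem_sub]
          exact ⟨_, ha, _, ha', rfl⟩
        · have hxg : x * (a * a') = g := by rw [haa', hxs]
          have hfg : f x * (f a / f a'⁻¹) = f g := by
            rw [map_inv, div_eq_mul_inv, inv_inv, ← map_mul, ← map_mul, hxg]
          have h2 : Additive.ofMul (f x) + (Additive.ofMul (f a) - Additive.ofMul (f a'⁻¹))
              = Additive.ofMul (f x * (f a / f a'⁻¹)) := by
            rw [ofMul_mul, ofMul_div]
          rw [h2, hfg, hg, ofMul_toMul]
      have hle : #(Additive B) ≤ #Y := hCcov Y hYuniv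
      have : #Y ≤ #X := Cardinal.mk_image_le
      have hGB : #(Additive B) = #G := (Cardinal.mk_congr Additive.ofMul).symm.trans hB
      calc #G = #(Additive B) := hGB.symm
        _ ≤ #Y := hle
        _ ≤ #X := this
end

section
/- Let $\varkappa$ be an infinite cardinal and let $G$ be a free group of rank $\varkappa$ (equivalently, the free group on a set of generators of cardinality $\varkappa$). Then $G$ can be partitioned into countably many cells $G=\bigcup_{n\in\omega}A_n$ such that $cov(A_nA_n^{-1})=\varkappa$ for each $n\in\omega$. -/
open Cardinal Pointwise

section Aux

variable {S : Type u} (b : S → ℕ)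

/-- Retraction onto the letters of block `n`. -/
noncomputable def pihom (n : ℕ) : FreeGroup S →* FreeGroup S :=
  FreeGroup.lift (fun s => if b s = n then FreeGroup.of s else 1)

lemma pihom_of (n : ℕ) (s : S) :
    pihom b n (FreeGroup.of s) = if b s = n then FreeGroup.of s else 1 :=
  FreeGroup.lift_apply_of

lemma pihom_finite (g : FreeGroup S) : {n | pihom b n g ≠ 1}.Finite := by
  induction g with
  | C1 => simp
  | of s =>
      refine Set.Finite.subset (Set.finite_singleton (b s)) ?_
      intro n hn
      simp only [Set.mem_setOf_eq] at hn
      have h : pihom b n (FreeGroup.of s) ≠ 1 := hn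
      rw [pihom_of] at h
      rcases eq_or_ne (b s) n with hc | hc
      · exact hc ▸ rfl
      · rw [if_neg hc] at h; exact absurd rfl h
  | inv_of s _ =>
      refine Set.Finite.subset (Set.finite_singleton (b s)) ?_
      intro n hn
      simp only [Set.mem_setOf_eq] at hn
      have h : pihom b n (FreeGroup.of s)⁻¹ ≠ 1 := hn
      rw [map_inv, inv_ne_one, pihom_of] at h
      rcases eq_or_ne (b s) n with hc | hc
      · exact hc ▸ rfl
      · rw [if_neg hc] at h; exact absurd rfl h
  | mul g h ihg ihh =>
      refine Set.Finite.subset (ihg.union ihh) ?_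
      intro n hn
      simp only [Set.mem_setOf_eq] at hn
      by_contra hne
      simp only [Set.mem_union, Set.mem_setOf_eq, not_or, not_not] at hne
      rw [map_mul, hne.1, hne.2, one_mul] at hn
      exact hn rfl

lemma pihom_exists (g : FreeGroup S) : ∃ n, pihom b n g = 1 := by
  have h := (pihom_finite b g).infinite_compl
  obtain ⟨n, hn⟩ := h.nonempty
  exact ⟨n, not_not.mp hn⟩

/-- The least block on which `g` projects trivially. -/
noncomputable def cfun (g : FreeGroup S) : ℕ := sInf {n | pihom b n g = 1}

lemma pihom_cfun (g : FreeGroup S) : pihom b (cfun b g) g = 1 :=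
  Nat.sInf_mem (pihom_exists b g)

/-- A witness word using one letter from each block `< n`. -/
noncomputable def gseq (σ : ℕ → S) : ℕ → FreeGroup S
  | 0 => 1
  | n + 1 => gseq σ n * FreeGroup.of (σ n)

lemma pihom_gseq (σ : ℕ → S) (hσ : ∀ m, b (σ m) = m) (n k : ℕ) :
    pihom b k (gseq σ n) = if k < n then FreeGroup.of (σ k) else 1 := by
  induction n with
  | zero => simp [gseq]
  | succ n ih =>
      rw [gseq, map_mul, ih, pihom_of, hσ n]
      rcases lt_trichotomy k n with h | h | h
      · rw [if_pos h, if_pos (h.trans (Nat.lt_succ_self n)), if_neg (Nat.ne_of_gt h), mul_one]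
      · subst h
        rw [if_neg (lt_irrefl k), if_pos (Nat.lt_succ_self k), if_pos rfl, one_mul]
      · rw [if_neg (not_lt.mpr h.le), if_neg (not_lt.mpr h),
          if_neg (Nat.ne_of_lt h), mul_one]

lemma cfun_gseq (σ : ℕ → S) (hσ : ∀ m, b (σ m) = m) (n : ℕ) :
    cfun b (gseq σ n) = n := by
  have hn : pihom b n (gseq σ n) = 1 := by
    rw [pihom_gseq b σ hσ, if_neg (lt_irrefl n)]
  refine le_antisymm (Nat.sInf_le hn) (le_csInf ⟨n, hn⟩ ?_)
  intro m hm
  by_contra hlt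
  push_neg at hlt
  rw [Set.mem_setOf_eq, pihom_gseq b σ hσ, if_pos hlt] at hm
  exact FreeGroup.of_ne_one (σ m) hm

end Aux

/-- The free group of infinite rank `κ` admits a partition into countably many cells
`A n` with `cov (A n * (A n)⁻¹) = κ` for every `n`. -/
theorem partition_cov_eq_card_free_group {S : Type u} (kap : Cardinal.{u})
    (hkap : ℵ₀ ≤ kap) (hS : #S = kap) :
    ∃ A : ℕ → Set (FreeGroup S),
      (⋃ n, A n) = Set.univ ∧
      (∀ m n, m ≠ n → Disjoint (A m) (A n)) ∧
      ∀ n, cov (A n * (A n)⁻¹) = kap := by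
  classical
  have hSinf : Infinite S := Cardinal.infinite_iff.mpr (hS ▸ hkap)
  -- an equivalence `ℕ × S ≃ S`
  have hcard : #(ℕ × S) = #S := by
    rw [Cardinal.mk_prod, Cardinal.mk_nat, Cardinal.lift_aleph0, Cardinal.lift_uzero, hS]
    exact Cardinal.mul_eq_right hkap hkap Cardinal.aleph0_ne_zero
  obtain ⟨e⟩ := Cardinal.eq.mp hcard
  set b : S → ℕ := fun s => (e.symm s).1 with hb
  obtain ⟨s₀⟩ : Nonempty S := inferInstance
  set σ : ℕ → S := fun m => e (m, s₀) with hσdef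
  have hσ : ∀ m, b (σ m) = m := by intro m; simp [hb, hσdef]
  -- cardinality of each block
  have hblock : ∀ n : ℕ, #{s : S // b s = n} = kap := by
    intro n
    have : {s : S // b s = n} ≃ S :=
      { toFun := fun x => (e.symm x.1).2
        invFun := fun t => ⟨e (n, t), by simp [hb]⟩
        left_inv := fun x => by
          obtain ⟨s, hs⟩ := x
          apply Subtype.ext
          simp only
          conv_rhs => rw [← e.apply_symm_apply s]
          congr 1
          exact Prod.ext hs.symm rfl
        right_inv := fun t => by simp }
    rw [Cardinal.mk_congr this, hS]
  -- cardinality of the free group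
  have hG : #(FreeGroup S) = kap := by
    apply le_antisymm
    · calc #(FreeGroup S) ≤ #(List (S × Bool)) :=
            Cardinal.mk_le_of_injective FreeGroup.toWord_injective
        _ = #(S × Bool) := Cardinal.mk_list_eq_mk _
        _ = kap := by
            rw [Cardinal.mk_prod, Cardinal.lift_uzero, Cardinal.mk_bool, Cardinal.lift_two, hS]
            exact Cardinal.mul_eq_left hkap
              (le_trans (by simpa using (Cardinal.nat_lt_aleph0 2).le) hkap) (by simp)
    · rw [← hS]; exact Cardinal.mk_le_of_injective FreeGroup.of_injective
  refine ⟨fun n => {g | cfun b g = n}, ?_, ?_, ?_⟩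
  · ext g
    simp only [Set.mem_iUnion, Set.mem_setOf_eq, Set.mem_univ, iff_true]
    exact ⟨cfun b g, rfl⟩
  · intro m n hmn
    rw [Set.disjoint_left]
    intro g hg hg'
    exact hmn (hg ▸ hg')
  · intro n
    set A : Set (FreeGroup S) := {g | cfun b g = n} with hA
    have hAne : (gseq σ n) ∈ A := cfun_gseq b σ hσ n
    have h1B : (1 : FreeGroup S) ∈ A * A⁻¹ := by
      rw [← mul_inv_cancel (gseq σ n)]
      exact Set.mul_mem_mul hAne (Set.inv_mem_inv.mpr hAne)
    -- B is contained in the kernel of `pihom b n`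
    have hBker : ∀ g ∈ A * A⁻¹, pihom b n g = 1 := by
      rintro g hg
      rw [Set.mem_mul] at hg
      obtain ⟨x, hx, y, hy, hxy⟩ := hg
      rw [Set.mem_inv] at hy
      have hx1 : pihom b n x = 1 := by
        have := pihom_cfun b x; rwa [hx] at this
      have hy1 : pihom b n y⁻¹ = 1 := by
        have := pihom_cfun b y⁻¹; rwa [hy] at this
      have hy1' : pihom b n y = 1 := by
        rw [map_inv, inv_eq_one] at hy1; exact hy1
      rw [← hxy, map_mul, hx1, hy1', one_mul]
    apply le_antisymm
    · apply csInf_le'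
      refine ⟨Set.univ, ?_, ?_⟩
      · rw [Cardinal.mk_univ, hG]
      · ext g
        simp only [Set.mem_univ, iff_true]
        rw [Set.mem_mul]
        exact ⟨g, Set.mem_univ g, 1, h1B, mul_one g⟩
    · apply le_csInf
      · exact ⟨kap, Set.univ, by rw [Cardinal.mk_univ, hG], by
          ext g
          simp only [Set.mem_univ, iff_true]
          rw [Set.mem_mul]
          exact ⟨g, Set.mem_univ g, 1, h1B, mul_one g⟩⟩
      · rintro c ⟨X, hX, hXB⟩
        rw [← hX, ← hblock n]
        -- build an injection from the block into X
        have key : ∀ s : {s : S // b s = n}, ∃ x ∈ X, ∃ y ∈ A * A⁻¹,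
            x * y = FreeGroup.of s.1 := by
          intro s
          have : FreeGroup.of s.1 ∈ X * (A * A⁻¹) := by
            rw [hXB]; exact Set.mem_univ _
          rwa [Set.mem_mul] at this
        choose f hfX w hw hfw using key
        have hinj : Function.Injective (fun s : {s : S // b s = n} => (⟨f s, hfX s⟩ : X)) := by
          intro s t hst
          have hfst : f s = f t := congrArg Subtype.val hst
          have hs : pihom b n (FreeGroup.of s.1) = pihom b n (f s) := by
            rw [← hfw s, map_mul, hBker _ (hw s), mul_one]
          have ht : pihom b n (FreeGroup.of t.1) = pihom b n (f t) := by
            rw [← hfw t, map_mul, hBker _ (hw t), mul_one]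
          have : pihom b n (FreeGroup.of s.1) = pihom b n (FreeGroup.of t.1) := by
            rw [hs, ht, hfst]
          rw [pihom_of, pihom_of, if_pos s.2, if_pos t.2] at this
          exact Subtype.ext (FreeGroup.of_injective this)
        exact Cardinal.mk_le_of_injective hinj
end

section
/- Let $G$ be an infinite group of cardinality $\varkappa$ with $cf(\varkappa)=\aleph_0$. Then $G$ can be partitioned into countably many cells $G=\bigcup_{n\in\omega}A_n$ such that $cov(A_nA_n^{-1})=\varkappa$ for each $n\in\omega$. -/
open Cardinal Pointwise

lemma cov_eq_card_of_small {G : Type*} [Group G] [Infinite G] {B : Set G}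
    (hne : B.Nonempty) (hlt : #B < #G) : cov B = #G := by
  obtain ⟨b, hb⟩ := hne
  have huniv : (Set.univ : Set G) * B = Set.univ := by
    apply Set.eq_univ_of_forall
    intro x
    exact ⟨x * b⁻¹, trivial, b, hb, by group⟩
  have hmem : #G ∈ {c : Cardinal | ∃ X : Set G, #X = c ∧ X * B = Set.univ} :=
    ⟨Set.univ, Cardinal.mk_univ, huniv⟩
  refine le_antisymm (csInf_le' hmem) (le_csInf ⟨_, hmem⟩ ?_)
  rintro c ⟨X, rfl, hXB⟩
  by_contra hlt2
  push_neg at hlt2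
  have h1 : #G ≤ #X * #B := by
    calc #G = #(Set.univ : Set G) := Cardinal.mk_univ.symm
    _ = #(X * B) := by rw [hXB]
    _ ≤ #X * #B := Cardinal.mk_mul_le
  exact h1.not_gt (Cardinal.mul_lt_of_lt (Cardinal.aleph0_le_mk G) hlt2 hlt)

lemma exists_not_mem_of_small {G : Type*} [Group G] {T : Set G}
    (h : #T < #G) : ∃ x, x ∉ T := by
  by_contra hc
  push_neg at hc
  have : T = Set.univ := Set.eq_univ_of_forall hc
  rw [this, Cardinal.mk_univ] at h
  exact h.false

/-- Every infinite group `G` whose cardinality has countable cofinality admits a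
partition into countably many cells `A n` with `cov (A n * (A n)⁻¹) = #G` for all `n`. -/
theorem partition_cov_eq_card_of_cof_eq_aleph0 {G : Type*} [Group G] [Infinite G]
    (hcof : (#G).ord.cof = ℵ₀) :
    ∃ A : ℕ → Set G,
      (⋃ n, A n) = Set.univ ∧
      (∀ m n, m ≠ n → Disjoint (A m) (A n)) ∧
      ∀ n, cov (A n * (A n)⁻¹) = #G := by
  classical
  -- A well order on `G` of type `(#G).ord`
  obtain ⟨r, wo, hr⟩ := Cardinal.ord_eq G
  haveI := wo
  rw [hr] at hcof
  -- A countable unbounded set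
  obtain ⟨S, hSu, hScard⟩ :
      ∃ S : Set G, Set.Unbounded r S ∧ #S = Ordinal.cof (Ordinal.type r) := by
    let := linearOrderOfSTO r
    have : WellFoundedLT G := wo.toIsWellFounded
    obtain ⟨s, hs, hs'⟩ := Order.exists_cof_eq G
    refine ⟨s, fun a => ?_, ?_⟩
    · obtain ⟨b, hb, hab⟩ := hs a
      exact ⟨b, hb, fun hba => hab.not_gt hba⟩
    · rw [hs']; exact (Ordinal.cof_type G).symm
  rw [hcof] at hScard
  haveI : Countable S := Cardinal.mk_le_aleph0_iff.mp hScard.le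
  haveI : Infinite S := Cardinal.infinite_iff.mpr hScard.ge
  obtain ⟨d⟩ := nonempty_denumerable ↥S
  haveI := d
  let e : ↥S ≃ ℕ := Denumerable.eqv ↥S
  set g : ℕ → G := fun n => (e.symm n : G) with hg
  -- initial segments
  set s : ℕ → Set G := fun n => insert (g n) {x | r x (g n)} with hs
  have haleph : (ℵ₀ : Cardinal) ≤ #G := Cardinal.aleph0_le_mk G
  have hone : (1 : Cardinal) < #G := Cardinal.one_lt_aleph0.trans_le haleph
  have hscard : ∀ n, #(s n) < #G := by
    intro n
    have h1 : #{x | r x (g n)} < #G := by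
      have := Cardinal.card_typein_lt (r := r) (g n) hr
      have he : #{x | r x (g n)} = (Ordinal.typein r (g n)).card :=
        Ordinal.card_typein (g n)
      rwa [he]
    calc #(s n) ≤ #{x | r x (g n)} + 1 := Cardinal.mk_insert_le
    _ < #G := Cardinal.add_lt_of_lt haleph h1 hone
  have hscover : (⋃ n, s n) = Set.univ := by
    apply Set.eq_univ_of_forall
    intro x
    obtain ⟨b, hbS, hbx⟩ := hSu x
    refine Set.mem_iUnion.mpr ⟨e ⟨b, hbS⟩, ?_⟩
    have hgb : g (e ⟨b, hbS⟩) = b := by simp [hg]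
    rw [hs]
    simp only [hgb]
    rcases trichotomous_of r x b with h | h | h
    · exact Set.mem_insert_of_mem _ h
    · exact h ▸ Set.mem_insert _ _
    · exact absurd h hbx
  -- picking fresh elements
  set pick : Set G → G := fun T => if h : ∃ x, x ∉ T then h.choose else Classical.arbitrary G
    with hpickdef
  have hpick : ∀ T : Set G, #T < #G → pick T ∉ T := by
    intro T hT
    have h : ∃ x, x ∉ T := exists_not_mem_of_small hT
    rw [hpickdef]
    simp only [dif_pos h]
    exact h.choose_spec
  -- the increasing chain
  set t : ℕ → Set G := fun n => Nat.rec (insert (Classical.arbitrary G) (s 0))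
    (fun n tn => insert (pick (tn ∪ s (n + 1))) (tn ∪ s (n + 1))) n with ht
  have ht0 : t 0 = insert (Classical.arbitrary G) (s 0) := rfl
  have htsucc : ∀ n, t (n + 1) = insert (pick (t n ∪ s (n + 1))) (t n ∪ s (n + 1)) :=
    fun n => rfl
  have htcard : ∀ n, #(t n) < #G := by
    intro n
    induction n with
    | zero =>
      rw [ht0]
      calc #(insert (Classical.arbitrary G) (s 0) : Set G) ≤ #(s 0) + 1 := Cardinal.mk_insert_le
      _ < #G := Cardinal.add_lt_of_lt haleph (hscard 0) hone
    | succ n ih =>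
      rw [htsucc n]
      have hu : #(t n ∪ s (n + 1) : Set G) < #G :=
        (Cardinal.mk_union_le _ _).trans_lt (Cardinal.add_lt_of_lt haleph ih (hscard (n + 1)))
      calc #(insert (pick (t n ∪ s (n + 1))) (t n ∪ s (n + 1)) : Set G)
          ≤ #(t n ∪ s (n + 1) : Set G) + 1 := Cardinal.mk_insert_le
      _ < #G := Cardinal.add_lt_of_lt haleph hu hone
  have htucard : ∀ n, #(t n ∪ s (n + 1) : Set G) < #G := fun n =>
    (Cardinal.mk_union_le _ _).trans_lt
      (Cardinal.add_lt_of_lt haleph (htcard n) (hscard (n + 1)))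
  have htmono : Monotone t := by
    apply monotone_nat_of_le_succ
    intro n
    rw [htsucc n]
    exact Set.subset_union_left.trans (Set.subset_insert _ _)
  have hst : ∀ n, s n ⊆ t n := by
    intro n
    cases n with
    | zero => rw [ht0]; exact Set.subset_insert _ _
    | succ n => rw [htsucc n]; exact Set.subset_union_right.trans (Set.subset_insert _ _)
  -- the partition
  refine ⟨disjointed t, ?_, ?_, ?_⟩
  · have h1 : (⨆ n, disjointed t n) = ⨆ n, t n := iSup_disjointed t
    have h2 : (⋃ n, t n) = Set.univ := by
      apply Set.eq_univ_of_univ_subset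
      rw [← hscover]
      exact Set.iUnion_mono hst
    calc (⋃ n, disjointed t n) = ⨆ n, disjointed t n := rfl
    _ = ⨆ n, t n := h1
    _ = Set.univ := h2
  · intro m n hmn
    exact disjoint_disjointed t hmn
  · intro n
    have hsub : disjointed t n ⊆ t n := disjointed_le t n
    have hcard : #(disjointed t n : Set G) < #G :=
      (Cardinal.mk_le_mk_of_subset hsub).trans_lt (htcard n)
    have hne : (disjointed t n).Nonempty := by
      cases n with
      | zero =>
        rw [disjointed_zero, ht0]
        exact ⟨Classical.arbitrary G, Set.mem_insert _ _⟩
      | succ n =>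
        rw [htmono.disjointed_add_one n]
        refine ⟨pick (t n ∪ s (n + 1)), ?_, ?_⟩
        · exact (Set.ext_iff.mp (htsucc n) _).mpr (Set.mem_insert _ _)
        · intro hmem
          exact hpick _ (htucard n) (Set.mem_union_left _ hmem)
    obtain ⟨a, ha⟩ := hne
    have hBne : (disjointed t n * (disjointed t n)⁻¹).Nonempty :=
      ⟨a * a⁻¹, Set.mul_mem_mul ha (Set.inv_mem_inv.mpr ha)⟩
    have hBcard : #(disjointed t n * (disjointed t n)⁻¹ : Set G) < #G := by
      calc #(disjointed t n * (disjointed t n)⁻¹ : Set G)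
          ≤ #(disjointed t n : Set G) * #((disjointed t n)⁻¹ : Set G) := Cardinal.mk_mul_le
      _ = #(disjointed t n : Set G) * #(disjointed t n : Set G) := by rw [Cardinal.mk_inv]
      _ < #G := Cardinal.mul_lt_of_lt haleph hcard hcard
    exact cov_eq_card_of_small hBne hBcard
end
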